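/- arXiv:1801.04716 — 4 statements merged into one kernel-verified Lean document; each statement's English description precedes it below -/
import Mathlib

section
/- First-order conditions (fixed-point equations) for MM-estimators in the SUR model. Let ρ₁ be a ρ-function, ψ₁ = ρ₁', w₁(u) = ψ₁(u)/u, and let σ̃ > 0 be a given scale. Suppose (B̂, Ĝ) is a local minimizer of (1/n) Σ_{i=1}^n ρ₁(√(e_i(B)ᵀ G⁻¹ e_i(B))/σ̃) over block-diagonal B ∈ ℝ^{p×m} and symmetric positive definite G with det G = 1. Set Σ̂ = σ̃² Ĝ, d_i = √(e_i(B̂)ᵀ Σ̂⁻¹ e_i(B̂)), assume d_i > 0 for all i, let D = diag(w₁(d₁),…,w₁(d_n)), assume Σ_{i=1}^n ψ₁(d_i) d_i ≠ 0 and that Xᵀ(Σ̂⁻¹ ⊗ D)X is invertible, where X = bdiag(X₁,…,X_m) ∈ ℝ^{nm×p}, y = (y₁ᵀ,…,y_mᵀ)ᵀ ∈ ℝ^{nm}, and Σ̂⁻¹ ⊗ D acts on coordinates indexed by (block, observation). Then the stacked coefficient vector β̂ of B̂ satisfies β̂ = (Xᵀ(Σ̂⁻¹ ⊗ D)X)⁻¹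 Xᵀ(Σ̂⁻¹ ⊗ D) y, and Σ̂ = m · (Y − X̃B̂)ᵀ D (Y − X̃B̂) / (Σ_{i=1}^n ψ₁(d_i) d_i). -/
open Matrix

noncomputable section

/-- The index set of the stacked coefficient vector of a SUR model with `m` blocks,
where block `j` has `pdim j` predictors. -/
abbrev SURIdx (m : ℕ) (pdim : Fin m → ℕ) : Type := (j : Fin m) × Fin (pdim j)

/-- A ρ-function with tuning constant `c`. -/
def IsRhoFunction (ρ : ℝ → ℝ) (c : ℝ) : Prop :=
  0 < c ∧ (∀ u, ρ (-u) = ρ u) ∧ ContDiff ℝ 2 ρ ∧ ρ 0 = 0 ∧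
    StrictMonoOn ρ (Set.Icc 0 c) ∧ ∀ u, c ≤ u → ρ u = ρ c

/-- Residual of observation `i`: the `i`-th row of `Y − X̃ B`, where `B` is the
block-diagonal coefficient matrix built from the stacked coefficient vector `b`. -/
def resid {n m : ℕ} {pdim : Fin m → ℕ} (X : Matrix (Fin n) (SURIdx m pdim) ℝ)
    (Y : Matrix (Fin n) (Fin m) ℝ) (b : SURIdx m pdim → ℝ) (i : Fin n) : Fin m → ℝ :=
  fun j => Y i j - ∑ k : Fin (pdim j), X i ⟨j, k⟩ * b ⟨j, k⟩

/-- The S-estimation constraint `(1/n) Σᵢ ρ₀(√(eᵢ(B)ᵀ C⁻¹ eᵢ(B))) = δ₀`. -/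
def SConstraint {n m : ℕ} {pdim : Fin m → ℕ} (ρ₀ : ℝ → ℝ) (δ₀ : ℝ)
    (X : Matrix (Fin n) (SURIdx m pdim) ℝ) (Y : Matrix (Fin n) (Fin m) ℝ)
    (b : SURIdx m pdim → ℝ) (C : Matrix (Fin m) (Fin m) ℝ) : Prop :=
  (1 / (n : ℝ)) * ∑ i, ρ₀ (Real.sqrt (resid X Y b i ⬝ᵥ C⁻¹.mulVec (resid X Y b i))) = δ₀

/-- `(b, C)` is a global minimizer of the S-estimation problem: `C` is symmetric positive
definite, the constraint holds, and `det C` is minimal among all feasible pairs. -/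
def IsSMin {n m : ℕ} {pdim : Fin m → ℕ} (ρ₀ : ℝ → ℝ) (δ₀ : ℝ)
    (X : Matrix (Fin n) (SURIdx m pdim) ℝ) (Y : Matrix (Fin n) (Fin m) ℝ)
    (b : SURIdx m pdim → ℝ) (C : Matrix (Fin m) (Fin m) ℝ) : Prop :=
  C.PosDef ∧ SConstraint ρ₀ δ₀ X Y b C ∧
    ∀ (b' : SURIdx m pdim → ℝ) (C' : Matrix (Fin m) (Fin m) ℝ),
      C'.PosDef → SConstraint ρ₀ δ₀ X Y b' C' → C.det ≤ C'.det

open Kronecker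

/-- The stacked block-diagonal design matrix `X = bdiag(X₁,…,X_m) ∈ ℝ^{nm×p}`, with rows
indexed by pairs `(j, i)` of block and observation. -/
def bigXS {n m : ℕ} {pdim : Fin m → ℕ} (X : Matrix (Fin n) (SURIdx m pdim) ℝ) :
    Matrix (Fin m × Fin n) (SURIdx m pdim) ℝ :=
  Matrix.of fun r q => if r.1 = q.1 then X r.2 q else 0

/-- The MM objective `(1/n) Σᵢ ρ₁(√(eᵢ(B)ᵀ G⁻¹ eᵢ(B))/σ̃)`. -/
def MMobj {n m : ℕ} {pdim : Fin m → ℕ} (ρ₁ : ℝ → ℝ) (σ : ℝ)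
    (X : Matrix (Fin n) (SURIdx m pdim) ℝ) (Y : Matrix (Fin n) (Fin m) ℝ)
    (b : SURIdx m pdim → ℝ) (G : Matrix (Fin m) (Fin m) ℝ) : ℝ :=
  (1 / (n : ℝ)) * ∑ i, ρ₁ (Real.sqrt (resid X Y b i ⬝ᵥ G⁻¹.mulVec (resid X Y b i)) / σ)

section AuxMM

variable {m : ℕ}

lemma auxSmulInv {k : ℝ} (hk : k ≠ 0) {A : Matrix (Fin m) (Fin m) ℝ}
    (hA : IsUnit A.det) : (k • A)⁻¹ = k⁻¹ • A⁻¹ := by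
  apply Matrix.inv_eq_right_inv
  rw [Matrix.smul_mul, Matrix.mul_smul, Matrix.mul_nonsing_inv _ hA, smul_smul,
    mul_inv_cancel₀ hk, one_smul]

lemma auxPosDefSmul {k : ℝ} (hk : 0 < k) {A : Matrix (Fin m) (Fin m) ℝ}
    (hA : A.PosDef) : (k • A).PosDef := by
  refine Matrix.PosDef.of_dotProduct_mulVec_pos ?_ (fun x hx => ?_)
  · have h1 := hA.1
    unfold Matrix.IsHermitian at h1 ⊢
    rw [conjTranspose_smul, h1]
    simp
  · have := hA.dotProduct_mulVec_pos hx
    rw [Matrix.smul_mulVec, dotProduct_smul, smul_eq_mul]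
    positivity

lemma auxPosDefCongr {B A : Matrix (Fin m) (Fin m) ℝ} (hB : IsUnit B.det)
    (hA : A.PosDef) : (B * A * Bᵀ).PosDef := by
  refine Matrix.PosDef.of_dotProduct_mulVec_pos ?_ (fun x hx => ?_)
  · have := Matrix.isHermitian_mul_mul_conjTranspose B hA.1
    simpa using this
  · have hxB : Bᵀ *ᵥ x ≠ 0 := by
      intro h
      apply hx
      have hBT : IsUnit Bᵀ.det := by rwa [Matrix.det_transpose]
      have := congrArg (fun v => (Bᵀ)⁻¹ *ᵥ v) h
      simpa [Matrix.mulVec_mulVec, Matrix.nonsing_inv_mul _ hBT] using this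
    have h := hA.dotProduct_mulVec_pos hxB
    have he : x ⬝ᵥ (B * A * Bᵀ) *ᵥ x = (Bᵀ *ᵥ x) ⬝ᵥ A *ᵥ (Bᵀ *ᵥ x) := by
      rw [← Matrix.mulVec_mulVec, ← Matrix.mulVec_mulVec, Matrix.dotProduct_mulVec,
        ← Matrix.mulVec_transpose]
    simpa [he] using h

lemma auxHasDerivAtRho (ρ₁ : ℝ → ℝ) (hρ : Differentiable ℝ ρ₁) {σt dv : ℝ}
    (hσ : 0 < σt) (hdv : 0 < dv) {q : ℝ → ℝ} {q' : ℝ}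
    (hq : HasDerivAt q q' 0) (hq0 : q 0 = σt ^ 2 * dv ^ 2) :
    HasDerivAt (fun t => ρ₁ (Real.sqrt (q t) / σt))
      (deriv ρ₁ dv * q' / (2 * σt ^ 2 * dv)) 0 := by
  have hq0pos : 0 < q 0 := by rw [hq0]; positivity
  have hsq : Real.sqrt (q 0) = σt * dv := by
    rw [hq0, show σt ^ 2 * dv ^ 2 = (σt * dv) ^ 2 by ring, Real.sqrt_sq (by positivity)]
  have h1 : HasDerivAt (fun t => Real.sqrt (q t)) (1 / (2 * Real.sqrt (q 0)) * q') 0 :=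
    (Real.hasDerivAt_sqrt (ne_of_gt hq0pos)).comp 0 hq
  have h2 : HasDerivAt (fun t => Real.sqrt (q t) / σt)
      (1 / (2 * Real.sqrt (q 0)) * q' / σt) 0 := h1.div_const σt
  have hg0 : Real.sqrt (q 0) / σt = dv := by rw [hsq]; field_simp
  have h3 : HasDerivAt ρ₁ (deriv ρ₁ dv) (Real.sqrt (q 0) / σt) := by
    rw [hg0]; exact (hρ dv).hasDerivAt
  have h4 := h3.comp 0 h2
  refine h4.congr_deriv ?_
  rw [hsq]
  have h5 : σt ≠ 0 := ne_of_gt hσ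
  have h6 : dv ≠ 0 := ne_of_gt hdv
  field_simp

lemma auxHasDerivAtQuad (c0 c1 c2 : ℝ) :
    HasDerivAt (fun t : ℝ => c0 + t * c1 + t ^ 2 * c2) c1 0 := by
  have h1 : HasDerivAt (fun t : ℝ => t * c1) c1 0 := by
    simpa using (hasDerivAt_id (0 : ℝ)).mul_const c1
  have h2 : HasDerivAt (fun t : ℝ => t ^ 2 * c2) 0 0 := by
    simpa using (hasDerivAt_pow 2 (0 : ℝ)).mul_const c2
  exact (((hasDerivAt_const (0 : ℝ) c0).add h1).add h2).congr_deriv (by simp)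

lemma auxQuadExpand (A : Matrix (Fin m) (Fin m) ℝ) (e u : Fin m → ℝ) (t : ℝ) :
    (fun j => e j - t * u j) ⬝ᵥ A *ᵥ (fun j => e j - t * u j)
      = e ⬝ᵥ A *ᵥ e + t * (-(e ⬝ᵥ A *ᵥ u) - u ⬝ᵥ A *ᵥ e) + t ^ 2 * (u ⬝ᵥ A *ᵥ u) := by
  have h : (fun j => e j - t * u j) = e - t • u := by funext j; simp
  rw [h]
  simp only [Matrix.mulVec_sub, Matrix.mulVec_smul, sub_dotProduct, dotProduct_sub,
    smul_dotProduct, dotProduct_smul, smul_eq_mul, smul_sub]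
  ring

lemma auxDotSymmSelf (M : Matrix (Fin m) (Fin m) ℝ) (e : Fin m → ℝ) :
    e ⬝ᵥ Mᵀ *ᵥ e = e ⬝ᵥ M *ᵥ e := by
  rw [Matrix.mulVec_transpose, dotProduct_comm, ← Matrix.dotProduct_mulVec]

lemma auxDotSymm (A : Matrix (Fin m) (Fin m) ℝ) (hA : Aᵀ = A) (e u : Fin m → ℝ) :
    e ⬝ᵥ A *ᵥ u = u ⬝ᵥ A *ᵥ e := by
  rw [Matrix.dotProduct_mulVec, ← Matrix.mulVec_transpose, hA, dotProduct_comm]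

lemma auxCongrExpand (L A : Matrix (Fin m) (Fin m) ℝ) (e : Fin m → ℝ) (t : ℝ) :
    e ⬝ᵥ ((1 + t • L) * A * (1 + t • L)ᵀ) *ᵥ e
      = e ⬝ᵥ A *ᵥ e + t * (e ⬝ᵥ (L * A) *ᵥ e + e ⬝ᵥ (A * Lᵀ) *ᵥ e)
        + t ^ 2 * (e ⬝ᵥ (L * A * Lᵀ) *ᵥ e) := by
  simp only [Matrix.transpose_add, Matrix.transpose_smul, Matrix.transpose_one,
    Matrix.add_mul, Matrix.mul_add, Matrix.smul_mul, Matrix.mul_smul, Matrix.one_mul,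
    Matrix.mul_one, Matrix.add_mulVec, Matrix.smul_mulVec, dotProduct_add,
    dotProduct_smul, smul_eq_mul, Matrix.mul_assoc]
  ring

end AuxMM

/-- **First-order conditions (fixed-point equations) for MM-estimators in the SUR
model**: a local minimizer `(B̂, Ĝ)` of the MM objective over block-diagonal `B` and
symmetric positive definite `G` with `det G = 1` satisfies, with `Σ̂ = σ̃² Ĝ`,
`β̂ = (Xᵀ(Σ̂⁻¹ ⊗ D)X)⁻¹ Xᵀ(Σ̂⁻¹ ⊗ D) y` and
`Σ̂ = m (Y − X̃B̂)ᵀ D (Y − X̃B̂) / Σᵢ ψ₁(dᵢ)dᵢ`. -/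
theorem MM_estimator_first_order_conditions
    {n m : ℕ} (hm : 1 < m) {pdim : Fin m → ℕ}
    (ρ₁ : ℝ → ℝ) (c₁ : ℝ) (hρ₁ : IsRhoFunction ρ₁ c₁)
    (w₁ : ℝ → ℝ) (hw₁ : ∀ u : ℝ, u ≠ 0 → w₁ u = deriv ρ₁ u / u)
    (σt : ℝ) (hσt : 0 < σt)
    (X : Matrix (Fin n) (SURIdx m pdim) ℝ) (Y : Matrix (Fin n) (Fin m) ℝ)
    (bh : SURIdx m pdim → ℝ) (Gh : Matrix (Fin m) (Fin m) ℝ)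
    (hGpd : Gh.PosDef) (hGdet : Gh.det = 1)
    -- (B̂, Ĝ) locally minimizes the MM objective subject to the shape constraints
    (hloc : ∀ᶠ bc : (SURIdx m pdim → ℝ) × (Fin m → Fin m → ℝ) in
        nhds (bh, fun i j => Gh i j),
      (Matrix.of bc.2).PosDef → (Matrix.of bc.2).det = 1 →
        MMobj ρ₁ σt X Y bh Gh ≤ MMobj ρ₁ σt X Y bc.1 (Matrix.of bc.2))
    -- Σ̂ = σ̃² Ĝ and the residual distances dᵢ, assumed positive
    (Sh : Matrix (Fin m) (Fin m) ℝ) (hSh : Sh = σt ^ 2 • Gh)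
    (d : Fin n → ℝ)
    (hd : ∀ i, d i = Real.sqrt (resid X Y bh i ⬝ᵥ Sh⁻¹.mulVec (resid X Y bh i)))
    (hdpos : ∀ i, 0 < d i)
    (hsum : ∑ i, deriv ρ₁ (d i) * d i ≠ 0)
    -- the weight matrix D
    (D : Matrix (Fin n) (Fin n) ℝ) (hD : D = Matrix.diagonal fun i => w₁ (d i))
    (hinv : IsUnit ((bigXS X)ᵀ * (Sh⁻¹ ⊗ₖ D) * bigXS X).det) :
    bh = ((bigXS X)ᵀ * (Sh⁻¹ ⊗ₖ D) * bigXS X)⁻¹.mulVec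
        (((bigXS X)ᵀ * (Sh⁻¹ ⊗ₖ D)).mulVec fun r => Y r.2 r.1) ∧
      Sh = ((m : ℝ) / ∑ i, deriv ρ₁ (d i) * d i) •
        ((Matrix.of fun i j => resid X Y bh i j)ᵀ * D *
          Matrix.of fun i j => resid X Y bh i j) := by
  have hρdiff : Differentiable ℝ ρ₁ := hρ₁.2.2.1.differentiable (by norm_num)
  set e : Fin n → Fin m → ℝ := fun i => resid X Y bh i with he
  have hσne : σt ≠ 0 := ne_of_gt hσt
  have hn : (1 / (n : ℝ)) ≠ 0 := by
    rcases Nat.eq_zero_or_pos n with h | h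
    · subst h; simp at hsum
    · have : (n : ℝ) ≠ 0 := Nat.cast_ne_zero.mpr (Nat.pos_iff_ne_zero.mp h)
      simpa using this
  have hdne : ∀ i, d i ≠ 0 := fun i => ne_of_gt (hdpos i)
  have hGdetu : IsUnit Gh.det := by rw [hGdet]; exact isUnit_one
  have hGipd : Gh⁻¹.PosDef := hGpd.inv
  have hGisym : Gh⁻¹ᵀ = Gh⁻¹ := by ext i j; simpa using hGipd.1.apply i j
  have hShinv : Sh⁻¹ = (σt ^ 2)⁻¹ • Gh⁻¹ := by
    rw [hSh]; exact auxSmulInv (by positivity) hGdetu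
  have hwd : ∀ i, w₁ (d i) = deriv ρ₁ (d i) / d i := fun i => hw₁ _ (hdne i)
  have hq0 : ∀ i, e i ⬝ᵥ Gh⁻¹ *ᵥ e i = σt ^ 2 * d i ^ 2 := by
    intro i
    have h1 : d i ^ 2 = e i ⬝ᵥ Sh⁻¹ *ᵥ e i := by
      rw [hd i, Real.sq_sqrt]
      have := (hSh ▸ auxPosDefSmul (by positivity) hGpd : Sh.PosDef).inv.posSemidef.dotProduct_mulVec_nonneg (e i)
      simpa using this
    have h2 : e i ⬝ᵥ Sh⁻¹ *ᵥ e i = (σt ^ 2)⁻¹ * (e i ⬝ᵥ Gh⁻¹ *ᵥ e i) := by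
      rw [hShinv, Matrix.smul_mulVec, dotProduct_smul, smul_eq_mul]
    rw [h1, h2]
    field_simp
  have hstat : ∀ (γb : ℝ → SURIdx m pdim → ℝ) (γG : ℝ → Fin m → Fin m → ℝ),
      ContinuousAt γb 0 → ContinuousAt γG 0 → γb 0 = bh → γG 0 = (fun i j => Gh i j) →
      (∀ᶠ t in nhds (0 : ℝ), (Matrix.of (γG t)).PosDef) →
      (∀ᶠ t in nhds (0 : ℝ), (Matrix.of (γG t)).det = 1) →
      IsLocalMin (fun t => MMobj ρ₁ σt X Y (γb t) (Matrix.of (γG t))) 0 := by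
    intro γb γG hcb hcG h0b h0G hpd hdet1
    have hγ : Filter.Tendsto (fun t => (γb t, γG t)) (nhds 0)
        (nhds (bh, fun i j => Gh i j)) := by
      rw [← h0b, ← h0G]
      exact hcb.prodMk_nhds hcG
    have h2 := hγ.eventually hloc
    have hev : ∀ᶠ t in nhds (0 : ℝ),
        (fun t => MMobj ρ₁ σt X Y (γb t) (Matrix.of (γG t))) 0 ≤
          (fun t => MMobj ρ₁ σt X Y (γb t) (Matrix.of (γG t))) t := by
      filter_upwards [h2, hpd, hdet1] with t ht hp hd1
      have h3 : MMobj ρ₁ σt X Y bh Gh ≤ MMobj ρ₁ σt X Y (γb t) (Matrix.of (γG t)) :=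
        ht hp hd1
      show MMobj ρ₁ σt X Y (γb 0) (Matrix.of (γG 0)) ≤ _
      rw [h0b, h0G]
      exact h3
    exact hev
  have keyB0 : ∀ v : SURIdx m pdim → ℝ,
      (∑ i, w₁ (d i) *
        ((fun j => ∑ k : Fin (pdim j), X i ⟨j, k⟩ * v ⟨j, k⟩) ⬝ᵥ Gh⁻¹ *ᵥ e i)) = 0 := by
    intro v
    set u : Fin n → Fin m → ℝ := fun i j => ∑ k : Fin (pdim j), X i ⟨j, k⟩ * v ⟨j, k⟩ with hu
    have hmin := hstat (fun t q => bh q + t * v q) (fun _ i j => Gh i j)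
      (by
        apply Continuous.continuousAt
        apply continuous_pi
        intro q
        exact continuous_const.add (continuous_id.mul continuous_const))
      continuousAt_const
      (by funext q; simp) rfl
      (Filter.Eventually.of_forall fun t => hGpd)
      (Filter.Eventually.of_forall fun t => hGdet)
    have hres : ∀ (t : ℝ) i, resid X Y (fun q => bh q + t * v q) i
        = fun j => e i j - t * u i j := by
      intro t i
      funext j
      simp only [he, hu, resid]
      rw [sub_sub, Finset.mul_sum, ← Finset.sum_add_distrib]
      congr 1
      exact Finset.sum_congr rfl fun k _ => by ring
    have hqd : ∀ i, HasDerivAt (fun t : ℝ =>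
        resid X Y (fun q => bh q + t * v q) i ⬝ᵥ Gh⁻¹ *ᵥ resid X Y (fun q => bh q + t * v q) i)
        (-(e i ⬝ᵥ Gh⁻¹ *ᵥ u i) - u i ⬝ᵥ Gh⁻¹ *ᵥ e i) 0 := by
      intro i
      have heq : (fun t : ℝ => resid X Y (fun q => bh q + t * v q) i ⬝ᵥ Gh⁻¹ *ᵥ
          resid X Y (fun q => bh q + t * v q) i)
          = fun t => e i ⬝ᵥ Gh⁻¹ *ᵥ e i
            + t * (-(e i ⬝ᵥ Gh⁻¹ *ᵥ u i) - u i ⬝ᵥ Gh⁻¹ *ᵥ e i)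
            + t ^ 2 * (u i ⬝ᵥ Gh⁻¹ *ᵥ u i) := by
        funext t
        rw [hres t i]
        exact auxQuadExpand _ _ _ t
      rw [heq]
      exact auxHasDerivAtQuad _ _ _
    have hFd : HasDerivAt (fun t => MMobj ρ₁ σt X Y (fun q => bh q + t * v q)
        (Matrix.of fun i j => Gh i j))
        ((1 / (n : ℝ)) * ∑ i, deriv ρ₁ (d i) *
          (-(e i ⬝ᵥ Gh⁻¹ *ᵥ u i) - u i ⬝ᵥ Gh⁻¹ *ᵥ e i) / (2 * σt ^ 2 * d i)) 0 := by
      have hterms : ∀ i ∈ Finset.univ, HasDerivAt (fun t : ℝ =>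
          ρ₁ (Real.sqrt (resid X Y (fun q => bh q + t * v q) i ⬝ᵥ Gh⁻¹ *ᵥ
            resid X Y (fun q => bh q + t * v q) i) / σt))
          (deriv ρ₁ (d i) * (-(e i ⬝ᵥ Gh⁻¹ *ᵥ u i) - u i ⬝ᵥ Gh⁻¹ *ᵥ e i)
            / (2 * σt ^ 2 * d i)) 0 := by
        intro i _
        refine auxHasDerivAtRho ρ₁ hρdiff hσt (hdpos i) (hqd i) ?_
        have : resid X Y (fun q => bh q + (0 : ℝ) * v q) i = e i := by
          rw [hres 0 i]; funext j; simp
        rw [this]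
        exact hq0 i
      exact (HasDerivAt.fun_sum hterms).const_mul _
    have hz := hmin.hasDerivAt_eq_zero hFd
    have hterm : ∀ i ∈ Finset.univ, deriv ρ₁ (d i) *
        (-(e i ⬝ᵥ Gh⁻¹ *ᵥ u i) - u i ⬝ᵥ Gh⁻¹ *ᵥ e i) / (2 * σt ^ 2 * d i)
        = -(σt ^ 2)⁻¹ * (w₁ (d i) * (u i ⬝ᵥ Gh⁻¹ *ᵥ e i)) := by
      intro i _
      rw [auxDotSymm _ hGisym, hwd i]
      field_simp
      ring
    rw [Finset.sum_congr rfl hterm, ← Finset.mul_sum] at hz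
    have h2 : -(σt ^ 2)⁻¹ ≠ (0 : ℝ) := by
      simp only [neg_ne_zero]
      positivity
    exact (mul_eq_zero.mp ((mul_eq_zero.mp hz).resolve_left hn)).resolve_left h2
  have keyB : ∀ p : SURIdx m pdim,
      (∑ i, w₁ (d i) * (X i p * (Gh⁻¹ *ᵥ e i) p.1)) = 0 := by
    intro p
    have h := keyB0 (fun q => if q = p then (1 : ℝ) else 0)
    have hu : ∀ i, (fun j => ∑ k : Fin (pdim j),
          X i ⟨j, k⟩ * (if (⟨j, k⟩ : SURIdx m pdim) = p then (1 : ℝ) else 0))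
        = fun j => if j = p.1 then X i p else 0 := by
      intro i
      funext j
      rcases p with ⟨j0, k0⟩
      by_cases hj : j = j0
      · subst hj
        simp only [Sigma.mk.inj_iff, heq_eq_eq, true_and, if_pos rfl]
        rw [Finset.sum_eq_single k0]
        · simp
        · intro k _ hk
          simp [hk]
        · simp
      · simp only [Sigma.mk.inj_iff, hj, false_and, if_false, mul_zero,
          Finset.sum_const_zero]
    have hdot : ∀ i, ((fun j => if j = p.1 then X i p else 0) ⬝ᵥ Gh⁻¹ *ᵥ e i)
        = X i p * (Gh⁻¹ *ᵥ e i) p.1 := by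
      intro i
      simp [dotProduct, ite_mul]
    calc (∑ i, w₁ (d i) * (X i p * (Gh⁻¹ *ᵥ e i) p.1))
        = ∑ i, w₁ (d i) *
          ((fun j => ∑ k : Fin (pdim j),
              X i ⟨j, k⟩ * (if (⟨j, k⟩ : SURIdx m pdim) = p then (1 : ℝ) else 0))
            ⬝ᵥ Gh⁻¹ *ᵥ e i) := by
          refine Finset.sum_congr rfl fun i _ => ?_
          rw [hu i, hdot i]
      _ = 0 := h
  have hmne : (m : ℝ) ≠ 0 := Nat.cast_ne_zero.mpr (by omega)
  have keyG0 : ∀ L : Matrix (Fin m) (Fin m) ℝ,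
      (∑ i, w₁ (d i) * (e i ⬝ᵥ (L * Gh⁻¹) *ᵥ e i))
        = trace L / m * σt ^ 2 * ∑ i, deriv ρ₁ (d i) * d i := by
    intro L
    set P : Polynomial ℝ :=
      (Matrix.det (1 + (Polynomial.X : Polynomial ℝ) • L.map Polynomial.C)).divX.divX with hP
    set pf : ℝ → ℝ := fun t => 1 + trace L * t + Polynomial.eval t P * t ^ 2 with hpf
    have hdet1L : ∀ t : ℝ, (1 + t • L).det = pf t := fun t => Matrix.det_one_add_smul t L
    have hpf0 : pf 0 = 1 := by simp [hpf]
    have hpfcont : Continuous pf := by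
      apply Continuous.add
      · exact Continuous.add continuous_const (continuous_const.mul continuous_id)
      · exact P.continuous.mul (continuous_pow 2)
    have hpfd : HasDerivAt pf (trace L) 0 := by
      have h1 : HasDerivAt (fun t : ℝ => 1 + trace L * t) (trace L) 0 := by
        exact ((hasDerivAt_const (0 : ℝ) 1).add
          ((hasDerivAt_id (0 : ℝ)).const_mul (trace L))).congr_deriv (by simp)
      have h2 : HasDerivAt (fun t : ℝ => Polynomial.eval t P * t ^ 2) 0 0 := by
        have := (P.hasDerivAt (0 : ℝ)).mul (hasDerivAt_pow 2 (0 : ℝ))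
        exact this.congr_deriv (by simp)
      exact (h1.add h2).congr_deriv (by simp)
    have hpfne : ∀ᶠ t in nhds (0 : ℝ), pf t ≠ 0 :=
      hpfcont.continuousAt.eventually_ne (by rw [hpf0]; exact one_ne_zero)
    set H : ℝ → Matrix (Fin m) (Fin m) ℝ := fun t => (1 + t • L) * Gh⁻¹ * (1 + t • L)ᵀ with hH
    have hdetGi : Gh⁻¹.det = 1 := by
      rw [Matrix.det_nonsing_inv, hGdet]; simp
    have hdetH : ∀ t, (H t).det = pf t ^ 2 := by
      intro t
      simp only [hH]
      rw [Matrix.det_mul, Matrix.det_mul, Matrix.det_transpose, hdetGi, hdet1L]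
      ring
    have hHcont : Continuous H := by
      simp only [hH]
      have h1 : Continuous fun t : ℝ => 1 + t • L :=
        continuous_const.add (continuous_id.smul continuous_const)
      exact (h1.matrix_mul continuous_const).matrix_mul h1.matrix_transpose
    have hH0 : H 0 = Gh⁻¹ := by simp [hH]
    have hHpd : ∀ t : ℝ, pf t ≠ 0 → (H t).PosDef := by
      intro t ht
      have h1 : IsUnit (1 + t • L).det := by
        rw [hdet1L]; exact isUnit_iff_ne_zero.mpr ht
      exact auxPosDefCongr h1 hGipd
    set δ : ℝ → ℝ := fun t => pf t ^ 2 with hδ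
    have hδpos : ∀ t : ℝ, pf t ≠ 0 → 0 < δ t := by
      intro t ht; simp only [hδ]; positivity
    have hδ0 : δ 0 = 1 := by rw [hδ]; simp [hpf0]
    set G : ℝ → Matrix (Fin m) (Fin m) ℝ := fun t => (δ t ^ ((1 : ℝ)/m)) • (H t)⁻¹ with hG
    have hG0 : G 0 = Gh := by
      simp only [hG]
      rw [hδ0, Real.one_rpow, one_smul, hH0, Matrix.nonsing_inv_nonsing_inv _ hGdetu]
    have hGcont : ContinuousAt G 0 := by
      apply ContinuousAt.fun_smul
      · have hδcont : Continuous δ := hpfcont.pow 2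
        exact hδcont.continuousAt.rpow_const (Or.inl (by rw [hδ0]; exact one_ne_zero))
      · have h1 : ContinuousAt Inv.inv (H 0) := by
          apply continuousAt_matrix_inv
          rw [Ring.inverse_eq_inv']
          apply continuousAt_inv₀
          rw [hdetH 0, hpf0]; norm_num
        exact h1.comp hHcont.continuousAt
    have hupd : ∀ t : ℝ, pf t ≠ 0 → (Matrix.of fun i j => G t i j).PosDef := by
      intro t ht
      have h1 : (H t)⁻¹.PosDef := (hHpd t ht).inv
      have h2 : 0 < δ t ^ ((1 : ℝ)/m) := Real.rpow_pos_of_pos (hδpos t ht) _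
      exact auxPosDefSmul h2 h1
    have hudet : ∀ t : ℝ, pf t ≠ 0 → (Matrix.of fun i j => G t i j).det = 1 := by
      intro t ht
      have hδp := hδpos t ht
      show (G t).det = 1
      simp only [hG]
      rw [Matrix.det_smul, Matrix.det_nonsing_inv, hdetH, Ring.inverse_eq_inv,
        Fintype.card_fin]
      have hrp : (δ t ^ ((1 : ℝ)/m)) ^ (m : ℕ) = δ t := by
        rw [← Real.rpow_natCast (δ t ^ ((1 : ℝ)/m)) m, ← Real.rpow_mul (le_of_lt hδp),
          one_div, inv_mul_cancel₀ hmne, Real.rpow_one]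
      rw [hrp]
      simp only [hδ]
      exact mul_inv_cancel₀ (by positivity)
    have hmin := hstat (fun _ => bh) (fun t i j => G t i j) continuousAt_const hGcont
      rfl (by simp only [hG0])
      (by filter_upwards [hpfne] with t ht; exact hupd t ht)
      (by filter_upwards [hpfne] with t ht; exact hudet t ht)
    set cf : ℝ → ℝ := fun t => (δ t ^ ((1 : ℝ)/m))⁻¹ with hcf
    have hcf0 : cf 0 = 1 := by simp only [hcf]; rw [hδ0, Real.one_rpow, inv_one]
    have hcfd : HasDerivAt cf (-(2 * trace L / m)) 0 := by
      have hδd : HasDerivAt δ (2 * trace L) 0 := by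
        have := hpfd.pow 2
        exact this.congr_deriv (by simp [hpf0])
      have hg : HasDerivAt (fun t => δ t ^ ((1 : ℝ)/m))
          (2 * trace L * ((1 : ℝ)/m) * 1 ^ ((1 : ℝ)/m - 1)) 0 := by
        have := hδd.rpow_const (p := (1 : ℝ)/m) (Or.inl (by rw [hδ0]; exact one_ne_zero))
        rw [hδ0] at this
        exact this
      have h2 := hg.inv (by rw [hδ0, Real.one_rpow]; exact one_ne_zero)
      refine h2.congr_deriv ?_
      rw [hδ0]
      simp [Real.one_rpow]
      ring
    set ψ : Fin n → ℝ → ℝ := fun i t => e i ⬝ᵥ H t *ᵥ e i with hψ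
    have hψ0 : ∀ i, ψ i 0 = σt ^ 2 * d i ^ 2 := by
      intro i; simp only [hψ]; rw [hH0]; exact hq0 i
    set s : Fin n → ℝ := fun i => e i ⬝ᵥ (L * Gh⁻¹) *ᵥ e i with hs
    have hs2 : ∀ i, e i ⬝ᵥ (Gh⁻¹ * Lᵀ) *ᵥ e i = s i := by
      intro i
      have h1 : (Gh⁻¹ * Lᵀ) = (L * Gh⁻¹)ᵀ := by rw [Matrix.transpose_mul, hGisym]
      rw [h1, auxDotSymmSelf]
    have hψd : ∀ i, HasDerivAt (ψ i)
        (e i ⬝ᵥ (L * Gh⁻¹) *ᵥ e i + e i ⬝ᵥ (Gh⁻¹ * Lᵀ) *ᵥ e i) 0 := by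
      intro i
      have heq : ψ i = fun t => e i ⬝ᵥ Gh⁻¹ *ᵥ e i
          + t * (e i ⬝ᵥ (L * Gh⁻¹) *ᵥ e i + e i ⬝ᵥ (Gh⁻¹ * Lᵀ) *ᵥ e i)
          + t ^ 2 * (e i ⬝ᵥ (L * Gh⁻¹ * Lᵀ) *ᵥ e i) := by
        funext t
        simp only [hψ, hH]
        exact auxCongrExpand L Gh⁻¹ (e i) t
      rw [heq]
      exact auxHasDerivAtQuad _ _ _
    set q' : Fin n → ℝ := fun i => -(2 * trace L / m) * (σt ^ 2 * d i ^ 2) + 2 * s i with hq'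
    have hqd : ∀ i, HasDerivAt (fun t =>
        resid X Y bh i ⬝ᵥ (Matrix.of fun i j => G t i j)⁻¹ *ᵥ resid X Y bh i) (q' i) 0 := by
      intro i
      have hnice : HasDerivAt (fun t => cf t * ψ i t) (q' i) 0 := by
        have h1 := hcfd.mul (hψd i)
        refine h1.congr_deriv ?_
        simp only [hq']
        rw [hψ0 i, hcf0, hs2 i]
        ring
      apply hnice.congr_of_eventuallyEq
      filter_upwards [hpfne] with t ht
      have hHu : IsUnit (H t).det := by
        rw [hdetH]; exact isUnit_iff_ne_zero.mpr (pow_ne_zero 2 ht)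
      have hHiu : IsUnit (H t)⁻¹.det := by
        rw [Matrix.det_nonsing_inv, Ring.inverse_eq_inv, hdetH]
        exact isUnit_iff_ne_zero.mpr (inv_ne_zero (pow_ne_zero 2 ht))
      have hGinv : (Matrix.of fun i j => G t i j)⁻¹ = cf t • H t := by
        show (G t)⁻¹ = cf t • H t
        simp only [hG, hcf]
        rw [auxSmulInv (ne_of_gt (Real.rpow_pos_of_pos (hδpos t ht) _)) hHiu,
          Matrix.nonsing_inv_nonsing_inv _ hHu]
      rw [hGinv, Matrix.smul_mulVec, dotProduct_smul, smul_eq_mul]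
    have hFd : HasDerivAt (fun t => MMobj ρ₁ σt X Y bh (Matrix.of fun i j => G t i j))
        ((1 / (n : ℝ)) * ∑ i, deriv ρ₁ (d i) * q' i / (2 * σt ^ 2 * d i)) 0 := by
      have hterms : ∀ i ∈ Finset.univ, HasDerivAt (fun t : ℝ =>
          ρ₁ (Real.sqrt (resid X Y bh i ⬝ᵥ (Matrix.of fun i j => G t i j)⁻¹ *ᵥ
            resid X Y bh i) / σt))
          (deriv ρ₁ (d i) * q' i / (2 * σt ^ 2 * d i)) 0 := by
        intro i _
        refine auxHasDerivAtRho ρ₁ hρdiff hσt (hdpos i) (hqd i) ?_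
        show resid X Y bh i ⬝ᵥ (Matrix.of fun i j => G 0 i j)⁻¹ *ᵥ resid X Y bh i = _
        have h1 : (Matrix.of fun i j => G 0 i j) = Gh := by simp only [hG0]; rfl
        rw [h1]
        exact hq0 i
      exact (HasDerivAt.fun_sum hterms).const_mul _
    have hz := hmin.hasDerivAt_eq_zero hFd
    have hterm : ∀ i ∈ Finset.univ, deriv ρ₁ (d i) * q' i / (2 * σt ^ 2 * d i)
        = (σt ^ 2)⁻¹ * (w₁ (d i) * s i) - trace L / m * (deriv ρ₁ (d i) * d i) := by
      intro i _
      simp only [hq']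
      rw [hwd i]
      field_simp [hσne, hdne i, hmne]
      ring
    rw [Finset.sum_congr rfl hterm, Finset.sum_sub_distrib, ← Finset.mul_sum,
      ← Finset.mul_sum] at hz
    have h4 := (mul_eq_zero.mp hz).resolve_left hn
    have h5 := sub_eq_zero.mp h4
    calc (∑ i, w₁ (d i) * (e i ⬝ᵥ (L * Gh⁻¹) *ᵥ e i))
        = σt ^ 2 * ((σt ^ 2)⁻¹ * ∑ i, w₁ (d i) * s i) := by
          simp only [hs]
          rw [← mul_assoc, mul_inv_cancel₀ (by positivity), one_mul]
      _ = σt ^ 2 * (trace L / m * ∑ i, deriv ρ₁ (d i) * d i) := by rw [h5]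
      _ = trace L / m * σt ^ 2 * ∑ i, deriv ρ₁ (d i) * d i := by ring
  have keyG : ∀ a b : Fin m,
      (∑ i, w₁ (d i) * (e i a * (Gh⁻¹ *ᵥ e i) b))
        = (if a = b then (1 : ℝ) else 0) / m * σt ^ 2 * ∑ i, deriv ρ₁ (d i) * d i := by
    intro a b
    have h := keyG0 (Matrix.single a b 1)
    have htr : trace (Matrix.single a b (1 : ℝ)) = if a = b then (1 : ℝ) else 0 := by
      by_cases hab : a = b
      · subst hab; simp
      · have hz : ∀ x : Fin m, Matrix.single a b (1 : ℝ) x x = 0 := by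
          intro x
          simp only [Matrix.single, Matrix.of_apply, ite_eq_right_iff, and_imp]
          rintro rfl rfl
          exact absurd rfl hab
        simp [Matrix.trace, Matrix.diag, hz, hab]
    have hsv : ∀ i, e i ⬝ᵥ (Matrix.single a b 1 * Gh⁻¹) *ᵥ e i
        = e i a * (Gh⁻¹ *ᵥ e i) b := by
      intro i
      rw [← Matrix.mulVec_mulVec]
      have hv : (Matrix.single a b (1 : ℝ)) *ᵥ (Gh⁻¹ *ᵥ e i)
          = fun r => if a = r then (Gh⁻¹ *ᵥ e i) b else 0 := by
        funext r
        simp only [Matrix.mulVec, dotProduct, Matrix.single, Matrix.of_apply,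
          ite_mul, one_mul, zero_mul, ite_and]
        by_cases har : a = r
        · simp [har]
        · simp [har]
      rw [hv]
      simp only [dotProduct, mul_ite, mul_zero]
      rw [Finset.sum_ite_eq Finset.univ a (fun r => e i r * (Gh⁻¹ *ᵥ e i) b)]
      simp
    rw [Finset.sum_congr rfl (fun i _ => by rw [hsv i] : ∀ i ∈ Finset.univ,
      w₁ (d i) * (e i ⬝ᵥ (Matrix.single a b 1 * Gh⁻¹) *ᵥ e i)
        = w₁ (d i) * (e i a * (Gh⁻¹ *ᵥ e i) b)), htr] at h
    exact h
  constructor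
  · -- first conclusion
    have hres0 : ((fun r : Fin m × Fin n => Y r.2 r.1) - (bigXS X) *ᵥ bh)
        = fun r : Fin m × Fin n => e r.2 r.1 := by
      funext r
      simp only [Pi.sub_apply, Matrix.mulVec, dotProduct, bigXS, Matrix.of_apply, he, resid]
      congr 1
      rw [← Finset.univ_sigma_univ, Finset.sum_sigma]
      rw [Finset.sum_eq_single r.1]
      · simp
      · intro j' _ hj'
        simp [Ne.symm hj']
      · simp
    have hcomp : ∀ p : SURIdx m pdim,
        (((bigXS X)ᵀ * (Sh⁻¹ ⊗ₖ D)) *ᵥ fun r : Fin m × Fin n => e r.2 r.1) p = 0 := by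
      intro p
      rw [← Matrix.mulVec_mulVec]
      have hw : ((Sh⁻¹ ⊗ₖ D) *ᵥ fun r : Fin m × Fin n => e r.2 r.1)
          = fun r : Fin m × Fin n => w₁ (d r.2) * (Sh⁻¹ *ᵥ e r.2) r.1 := by
        funext r
        show (∑ r' : Fin m × Fin n, (Sh⁻¹ ⊗ₖ D) r r' * e r'.2 r'.1) = _
        rw [Fintype.sum_prod_type]
        have h1 : ∀ l, (∑ i' : Fin n, (Sh⁻¹ ⊗ₖ D) r (l, i') * e i' l)
            = Sh⁻¹ r.1 l * w₁ (d r.2) * e r.2 l := by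
          intro l
          rw [Finset.sum_eq_single r.2]
          · simp only [Matrix.kroneckerMap_apply, hD, Matrix.diagonal_apply_eq]
          · intro i' _ hi'
            simp only [Matrix.kroneckerMap_apply, hD, Matrix.diagonal_apply_ne _ (Ne.symm hi')]
            ring
          · simp
        rw [Finset.sum_congr rfl fun l _ => h1 l]
        simp only [Matrix.mulVec, dotProduct, Finset.mul_sum]
        exact Finset.sum_congr rfl fun l _ => by ring
      rw [hw]
      show (∑ r : Fin m × Fin n, (bigXS X)ᵀ p r * (w₁ (d r.2) * (Sh⁻¹ *ᵥ e r.2) r.1)) = 0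
      rw [Fintype.sum_prod_type]
      have h3 : ∀ (j' : Fin m) (i : Fin n), (bigXS X)ᵀ p (j', i) = if j' = p.1 then X i p else 0 :=
        fun j' i => rfl
      rw [Finset.sum_eq_single p.1]
      · have h2 : ∀ i, (bigXS X)ᵀ p (p.1, i) * (w₁ (d i) * (Sh⁻¹ *ᵥ e i) p.1)
            = (σt ^ 2)⁻¹ * (w₁ (d i) * (X i p * (Gh⁻¹ *ᵥ e i) p.1)) := by
          intro i
          rw [h3, if_pos rfl, hShinv, Matrix.smul_mulVec]
          simp only [Pi.smul_apply, smul_eq_mul]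
          ring
        rw [Finset.sum_congr rfl fun i _ => h2 i, ← Finset.mul_sum, keyB p, mul_zero]
      · intro j' _ hj'
        refine Finset.sum_eq_zero fun i _ => ?_
        rw [h3, if_neg hj', zero_mul]
      · simp
    have hMbh : ((bigXS X)ᵀ * (Sh⁻¹ ⊗ₖ D) * bigXS X) *ᵥ bh
        = ((bigXS X)ᵀ * (Sh⁻¹ ⊗ₖ D)) *ᵥ (fun r : Fin m × Fin n => Y r.2 r.1) := by
      have h0 : ((bigXS X)ᵀ * (Sh⁻¹ ⊗ₖ D)) *ᵥ
          ((fun r : Fin m × Fin n => Y r.2 r.1) - (bigXS X) *ᵥ bh) = 0 := by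
        rw [hres0]
        funext p
        exact hcomp p
      rw [Matrix.mulVec_sub] at h0
      rw [← Matrix.mulVec_mulVec]
      exact (sub_eq_zero.mp h0).symm
    rw [← hMbh, Matrix.mulVec_mulVec, Matrix.nonsing_inv_mul _ hinv, Matrix.one_mulVec]
  · -- second conclusion
    set A : Matrix (Fin m) (Fin m) ℝ :=
      Matrix.of fun a c => ∑ i, w₁ (d i) * (e i a * e i c) with hA
    have hAG : A * Gh⁻¹ = ((σt ^ 2 * ∑ i, deriv ρ₁ (d i) * d i) / m) •
        (1 : Matrix (Fin m) (Fin m) ℝ) := by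
      ext a b
      have hsymm : ∀ c, Gh⁻¹ c b = Gh⁻¹ b c := by
        intro c
        conv_lhs => rw [← hGisym]
        rw [Matrix.transpose_apply]
      have hL : (A * Gh⁻¹) a b = ∑ i, w₁ (d i) * (e i a * (Gh⁻¹ *ᵥ e i) b) := by
        simp only [Matrix.mul_apply, hA, Matrix.of_apply, Finset.sum_mul]
        rw [Finset.sum_comm]
        refine Finset.sum_congr rfl fun i _ => ?_
        simp only [Matrix.mulVec, dotProduct, Finset.mul_sum]
        refine Finset.sum_congr rfl fun c _ => ?_
        rw [hsymm c]
        ring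
      rw [hL, keyG a b]
      simp only [Matrix.smul_apply, Matrix.one_apply, smul_eq_mul]
      by_cases hab : a = b
      · simp only [hab, if_pos rfl]
        ring
      · simp only [hab, if_false]
        ring
    have hAeq : A = ((σt ^ 2 * ∑ i, deriv ρ₁ (d i) * d i) / m) • Gh := by
      calc A = A * (Gh⁻¹ * Gh) := by rw [Matrix.nonsing_inv_mul _ hGdetu, Matrix.mul_one]
        _ = (A * Gh⁻¹) * Gh := by rw [Matrix.mul_assoc]
        _ = _ := by rw [hAG, Matrix.smul_mul, Matrix.one_mul]
    have hEDE : (Matrix.of fun i j => resid X Y bh i j)ᵀ * D *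
        (Matrix.of fun i j => resid X Y bh i j) = A := by
      rw [hD, Matrix.mul_assoc]
      ext a b
      simp only [Matrix.mul_apply, Matrix.transpose_apply, Matrix.of_apply, hA, he]
      refine Finset.sum_congr rfl fun i _ => ?_
      have hinner : (∑ x, Matrix.diagonal (fun i => w₁ (d i)) i x * resid X Y bh x b)
          = w₁ (d i) * resid X Y bh i b := by
        rw [Finset.sum_eq_single i]
        · rw [Matrix.diagonal_apply_eq]
        · intro x _ hx
          rw [Matrix.diagonal_apply_ne _ (Ne.symm hx), zero_mul]
        · simp
      rw [hinner]
      ring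
    rw [hEDE, hAeq, smul_smul, hSh]
    congr 1
    field_simp
end
end

section
/- Stationary points of the Gaussian log-likelihood of the SUR model satisfy the iterated FGLS equations. Let X = bdiag(X₁,…,X_m) ∈ ℝ^{nm×p}, y = (y₁ᵀ,…,y_mᵀ)ᵀ ∈ ℝ^{nm}, X̃ = (X₁,…,X_m), Y = (y₁,…,y_m), and define for β ∈ ℝ^p and symmetric positive definite Σ ∈ ℝ^{m×m} the log-likelihood l(β, Σ) = −(mn/2) ln(2π) − (n/2) ln(det Σ) − (1/2)(y − Xβ)ᵀ(Σ⁻¹ ⊗ I_n)(y − Xβ), where Σ⁻¹ ⊗ I_n acts on coordinates indexed by (block, observation). Suppose (β, Σ) is a stationary point of l, i.e. the derivative of l in β vanishes and the directional derivative of l at Σ along every symmetric matrix vanishes, and suppose Xᵀ(Σ⁻¹ ⊗ I_n)X is invertible. Then β = (Xᵀ(Σ⁻¹ ⊗ I_n)X)⁻¹ Xᵀ(Σ⁻¹ ⊗ I_n) y and Σ = (Y − X̃B)ᵀ(Y − X̃B)/n, where B is the block-diagonal arrangement of β. -/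
open Matrix Kronecker

noncomputable section

section Aux
open Polynomial

-- polynomial representation of M + t•V
lemma map_eval_aux {m : ℕ} (M V : Matrix (Fin m) (Fin m) ℝ) (t : ℝ) :
    M + t • V = (M.map C + (X : ℝ[X]) • V.map C).map (evalRingHom t) := by
  ext j k
  simp only [Matrix.add_apply, Matrix.smul_apply, Matrix.map_apply, coe_evalRingHom,
    eval_add, smul_eq_mul, eval_mul, eval_X, eval_C]

lemma hasDerivAt_det_aux {m : ℕ} (M V : Matrix (Fin m) (Fin m) ℝ) (h : IsUnit M.det) :
    HasDerivAt (fun t : ℝ => (M + t • V).det) (M.det * (M⁻¹ * V).trace) 0 := by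
  have hfac : ∀ t : ℝ, M + t • V = M * (1 + t • (M⁻¹ * V)) := by
    intro t
    rw [Matrix.mul_add, Matrix.mul_one, Matrix.mul_smul, Matrix.mul_nonsing_inv_cancel_left _ _ h]
  have hdet : ∀ t : ℝ, (M + t • V).det =
      M.det * (1 + (M⁻¹ * V).trace * t +
        ((1 + (X : ℝ[X]) • (M⁻¹ * V).map C).det).divX.divX.eval t * t ^ 2) := by
    intro t
    rw [hfac, Matrix.det_mul, Matrix.det_one_add_smul]
  rw [funext hdet]
  have h1 : HasDerivAt (fun t : ℝ => 1 + (M⁻¹ * V).trace * t +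
      ((1 + (X : ℝ[X]) • (M⁻¹ * V).map C).det).divX.divX.eval t * t ^ 2)
      ((M⁻¹ * V).trace) 0 := by
    have ha : HasDerivAt (fun t : ℝ => 1 + (M⁻¹ * V).trace * t) ((M⁻¹ * V).trace) 0 := by
      simpa using (hasDerivAt_id (0:ℝ)).const_mul ((M⁻¹ * V).trace) |>.const_add 1
    have hb : HasDerivAt (fun t : ℝ =>
        ((1 + (X : ℝ[X]) • (M⁻¹ * V).map C).det).divX.divX.eval t * t ^ 2) 0 0 := by
      have := (Polynomial.hasDerivAt ((1 + (X : ℝ[X]) • (M⁻¹ * V).map C).det).divX.divX (0:ℝ)).fun_mul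
        (hasDerivAt_pow 2 (0:ℝ))
      simpa using this
    simpa using ha.fun_add hb
  simpa [mul_add] using h1.const_mul M.det

lemma inv_entry_eq {m : ℕ} (A : Matrix (Fin m) (Fin m) ℝ) (j k : Fin m) :
    A⁻¹ j k = (A.det)⁻¹ * A.adjugate j k := by
  rw [Matrix.inv_def, Matrix.smul_apply, Ring.inverse_eq_inv', smul_eq_mul]

lemma hasDerivAt_inv_entry_aux {m : ℕ} (M V : Matrix (Fin m) (Fin m) ℝ) (h : IsUnit M.det)
    (j k : Fin m) :
    ∃ d : ℝ, HasDerivAt (fun t : ℝ => (M + t • V)⁻¹ j k) d 0 := by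
  have hdetrep : ∀ t : ℝ, (M + t • V).det =
      ((M.map C + (X : ℝ[X]) • V.map C).det).eval t := by
    intro t
    rw [map_eval_aux M V t, ← RingHom.mapMatrix_apply, ← RingHom.map_det]
    simp
  have hadjrep : ∀ t : ℝ, (M + t • V).adjugate j k =
      (((M.map C + (X : ℝ[X]) • V.map C).adjugate) j k).eval t := by
    intro t
    rw [map_eval_aux M V t, ← RingHom.mapMatrix_apply, ← RingHom.map_adjugate,
      RingHom.mapMatrix_apply, Matrix.map_apply]
    simp
  have hrep : (fun t : ℝ => (M + t • V)⁻¹ j k) = fun t : ℝ =>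
      (((M.map C + (X : ℝ[X]) • V.map C).det).eval t)⁻¹ *
        ((((M.map C + (X : ℝ[X]) • V.map C).adjugate) j k).eval t) := by
    funext t
    rw [inv_entry_eq, hdetrep, hadjrep]
  have hd0 : ((M.map C + (X : ℝ[X]) • V.map C).det).eval 0 ≠ 0 := by
    rw [← hdetrep 0]
    simpa using h.ne_zero
  have hder := ((Polynomial.hasDerivAt ((M.map C + (X : ℝ[X]) • V.map C).det) 0).fun_inv hd0).fun_mul
    (Polynomial.hasDerivAt ((M.map C + (X : ℝ[X]) • V.map C).adjugate j k) 0)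
  exact ⟨_, hrep ▸ hder⟩

lemma hasDerivAt_inv_entry {m : ℕ} (M V : Matrix (Fin m) (Fin m) ℝ) (h : IsUnit M.det)
    (j k : Fin m) :
    HasDerivAt (fun t : ℝ => (M + t • V)⁻¹ j k) (-(M⁻¹ * V * M⁻¹) j k) 0 := by
  set D : Matrix (Fin m) (Fin m) ℝ :=
    Matrix.of fun j k => deriv (fun t : ℝ => (M + t • V)⁻¹ j k) 0 with hDdef
  have hD : ∀ j k, HasDerivAt (fun t : ℝ => (M + t • V)⁻¹ j k) (D j k) 0 := by
    intro j k
    obtain ⟨d, hd⟩ := hasDerivAt_inv_entry_aux M V h j k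
    have : deriv (fun t : ℝ => (M + t • V)⁻¹ j k) 0 = d := hd.deriv
    simpa [hDdef, this] using hd
  have hdetrep : ∀ t : ℝ, (M + t • V).det =
      ((M.map C + (X : ℝ[X]) • V.map C).det).eval t := by
    intro t
    rw [map_eval_aux M V t, ← RingHom.mapMatrix_apply, ← RingHom.map_det]
    simp
  have hcont : ContinuousAt (fun t : ℝ => (M + t • V).det) 0 := by
    rw [funext hdetrep]
    exact (Polynomial.continuous _).continuousAt
  have hev : ∀ᶠ t in nhds (0:ℝ), (M + t • V).det ≠ 0 := by
    apply hcont.eventually_ne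
    simpa using h.ne_zero
  have hpin : D * M + M⁻¹ * V = 0 := by
    ext j k
    have h1 : HasDerivAt (fun t : ℝ => ∑ l, (M + t • V)⁻¹ j l * (M + t • V) l k)
        (∑ l, (D j l * M l k + M⁻¹ j l * V l k)) 0 := by
      apply HasDerivAt.fun_sum
      intro l _
      have hlin : HasDerivAt (fun t : ℝ => (M + t • V) l k) (V l k) 0 := by
        simpa [Matrix.add_apply, Matrix.smul_apply, smul_eq_mul, mul_comm] using
          ((hasDerivAt_id (0:ℝ)).const_mul (V l k)).const_add (M l k)
      have := (hD j l).fun_mul hlin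
      simpa using this
    have h2 : HasDerivAt (fun t : ℝ => ∑ l, (M + t • V)⁻¹ j l * (M + t • V) l k) 0 0 := by
      have hc : HasDerivAt (fun _ : ℝ => (1 : Matrix (Fin m) (Fin m) ℝ) j k) 0 0 :=
        hasDerivAt_const _ _
      apply hc.congr_of_eventuallyEq
      filter_upwards [hev] with t ht
      rw [← Matrix.mul_apply, Matrix.nonsing_inv_mul _ (isUnit_iff_ne_zero.mpr ht)]
    have h3 := h1.unique h2
    simp only [Matrix.add_apply, Matrix.mul_apply, Matrix.zero_apply]
    rw [Finset.sum_add_distrib] at h3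
    exact h3
  have hDM : D * M = -(M⁻¹ * V) := by
    rw [eq_neg_iff_add_eq_zero]
    exact hpin
  have hDval : D = -(M⁻¹ * V * M⁻¹) := by
    have := congrArg (fun A => A * M⁻¹) hDM
    simp only [Matrix.mul_nonsing_inv_cancel_right _ _ h] at this
    rw [this, Matrix.neg_mul]
  have := hD j k
  rwa [hDval] at this

lemma quadform_aux {n m : ℕ} (M : Matrix (Fin m) (Fin m) ℝ) (e : Fin m × Fin n → ℝ) :
    e ⬝ᵥ ((M ⊗ₖ (1 : Matrix (Fin n) (Fin n) ℝ)).mulVec e) =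
      ∑ j, ∑ k, M j k * (∑ i, e (j, i) * e (k, i)) := by
  simp only [dotProduct, Matrix.mulVec, Matrix.kroneckerMap_apply, Matrix.one_apply,
    Fintype.sum_prod_type, mul_ite, ite_mul, mul_one, mul_zero, zero_mul,
    Finset.sum_ite_eq, Finset.mem_univ, if_true]
  apply Finset.sum_congr rfl
  intro j _
  simp only [Finset.mul_sum]
  rw [Finset.sum_comm]
  exact Finset.sum_congr rfl fun k _ => Finset.sum_congr rfl fun i _ => by ring

lemma trace_mul_transpose_sum {m : ℕ} (P Sm : Matrix (Fin m) (Fin m) ℝ) :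
    Matrix.trace (P * Smᵀ) = ∑ j, ∑ k, P j k * Sm j k := by
  simp [Matrix.trace, Matrix.diag, Matrix.mul_apply, Matrix.transpose_apply]

end Aux

/-- **Stationary points of the Gaussian log-likelihood of the SUR model satisfy the
iterated FGLS equations**: if both the derivative of `l` in `β` and the directional
derivative of `l` at `Σ` along every symmetric matrix vanish, then
`β = (Xᵀ(Σ⁻¹ ⊗ I_n)X)⁻¹ Xᵀ(Σ⁻¹ ⊗ I_n) y` and `Σ = (Y − X̃B)ᵀ(Y − X̃B)/n`. -/
theorem MLE_stationary_point_FGLS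
    {n m : ℕ} (hm : 1 < m) (hn : 0 < n) {pdim : Fin m → ℕ}
    (X : Matrix (Fin n) (SURIdx m pdim) ℝ) (Y : Matrix (Fin n) (Fin m) ℝ)
    -- the Gaussian log-likelihood
    (l : (SURIdx m pdim → ℝ) → Matrix (Fin m) (Fin m) ℝ → ℝ)
    (hl : ∀ (βv : SURIdx m pdim → ℝ) (Sm : Matrix (Fin m) (Fin m) ℝ),
      l βv Sm = -((m : ℝ) * (n : ℝ) / 2) * Real.log (2 * Real.pi)
        - ((n : ℝ) / 2) * Real.log Sm.det
        - (1 / 2) * (((fun r : Fin m × Fin n => Y r.2 r.1) - (bigXS X).mulVec βv) ⬝ᵥ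
            ((Sm⁻¹ ⊗ₖ (1 : Matrix (Fin n) (Fin n) ℝ)).mulVec
              ((fun r : Fin m × Fin n => Y r.2 r.1) - (bigXS X).mulVec βv))))
    -- the stationary point (β, Σ) with Σ symmetric positive definite
    (βv : SURIdx m pdim → ℝ) (Sig : Matrix (Fin m) (Fin m) ℝ) (hSig : Sig.PosDef)
    (hβstat : ∀ v : SURIdx m pdim → ℝ, HasDerivAt (fun t : ℝ => l (βv + t • v) Sig) 0 0)
    (hSigstat : ∀ V : Matrix (Fin m) (Fin m) ℝ, Vᵀ = V →
      HasDerivAt (fun t : ℝ => l βv (Sig + t • V)) 0 0)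
    (hinv : IsUnit ((bigXS X)ᵀ * (Sig⁻¹ ⊗ₖ (1 : Matrix (Fin n) (Fin n) ℝ)) *
      bigXS X).det) :
    βv = ((bigXS X)ᵀ * (Sig⁻¹ ⊗ₖ (1 : Matrix (Fin n) (Fin n) ℝ)) * bigXS X)⁻¹.mulVec
        (((bigXS X)ᵀ * (Sig⁻¹ ⊗ₖ (1 : Matrix (Fin n) (Fin n) ℝ))).mulVec
          fun r => Y r.2 r.1) ∧
      Sig = ((n : ℝ))⁻¹ • ((Matrix.of fun i j => resid X Y βv i j)ᵀ *
        Matrix.of fun i j => resid X Y βv i j) := by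
  have hnR : (n : ℝ) ≠ 0 := Nat.cast_ne_zero.mpr hn.ne'
  have hSdet : Sig.det ≠ 0 := hSig.det_pos.ne'
  have hSu : IsUnit Sig.det := isUnit_iff_ne_zero.mpr hSdet
  set A : Matrix (Fin m × Fin n) (Fin m × Fin n) ℝ :=
    Sig⁻¹ ⊗ₖ (1 : Matrix (Fin n) (Fin n) ℝ) with hAdef
  set Xb := bigXS X with hXbdef
  set yv : Fin m × Fin n → ℝ := fun r => Y r.2 r.1 with hyvdef
  set e : Fin m × Fin n → ℝ := yv - Xb.mulVec βv with hedef
  -- symmetry of Sig and A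
  have hSigT : Sigᵀ = Sig := by
    ext j k
    have := congrFun (congrFun hSig.1 j) k
    simpa [Matrix.conjTranspose_apply] using this
  have hSigInvT : (Sig⁻¹)ᵀ = Sig⁻¹ := by
    rw [Matrix.transpose_nonsing_inv, hSigT]
  have hAsym : Aᵀ = A := by
    rw [hAdef, ← Matrix.kroneckerMap_transpose, hSigInvT, Matrix.transpose_one]
  have hswap : ∀ u w : Fin m × Fin n → ℝ, u ⬝ᵥ A.mulVec w = w ⬝ᵥ A.mulVec u := by
    intro u w
    rw [Matrix.dotProduct_mulVec, ← Matrix.mulVec_transpose, hAsym, dotProduct_comm]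
  -- Part 1: beta
  have hXAe : ∀ v : SURIdx m pdim → ℝ, (Xb.mulVec v) ⬝ᵥ (A.mulVec e) = 0 := by
    intro v
    set w := Xb.mulVec v with hwdef
    have hfe : ∀ t : ℝ, yv - Xb.mulVec (βv + t • v) = e - t • w := by
      intro t
      rw [Matrix.mulVec_add, Matrix.mulVec_smul, hedef]
      ext r
      simp
      ring
    have hfun : (fun t : ℝ => l (βv + t • v) Sig) = fun t : ℝ =>
        (-((m : ℝ) * (n : ℝ) / 2) * Real.log (2 * Real.pi)
          - ((n : ℝ) / 2) * Real.log Sig.det - (1 / 2) * (e ⬝ᵥ A.mulVec e))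
        + t * (w ⬝ᵥ A.mulVec e) - t * t * ((1 / 2) * (w ⬝ᵥ A.mulVec w)) := by
      funext t
      rw [hl, hfe t]
      have hexp : (e - t • w) ⬝ᵥ A.mulVec (e - t • w) =
          e ⬝ᵥ A.mulVec e - t * (e ⬝ᵥ A.mulVec w) - t * (w ⬝ᵥ A.mulVec e)
            + t * t * (w ⬝ᵥ A.mulVec w) := by
        rw [Matrix.mulVec_sub, Matrix.mulVec_smul]
        simp only [sub_dotProduct, dotProduct_sub, smul_dotProduct, dotProduct_smul,
          smul_eq_mul]
        ring
      rw [hexp, hswap e w]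
      ring
    have hD : HasDerivAt (fun t : ℝ =>
        (-((m : ℝ) * (n : ℝ) / 2) * Real.log (2 * Real.pi)
          - ((n : ℝ) / 2) * Real.log Sig.det - (1 / 2) * (e ⬝ᵥ A.mulVec e))
        + t * (w ⬝ᵥ A.mulVec e) - t * t * ((1 / 2) * (w ⬝ᵥ A.mulVec w)))
        (w ⬝ᵥ A.mulVec e) 0 := by
      have h1 : HasDerivAt (fun t : ℝ => t * (w ⬝ᵥ A.mulVec e)) (w ⬝ᵥ A.mulVec e) 0 := by
        simpa using (hasDerivAt_id (0:ℝ)).mul_const (w ⬝ᵥ A.mulVec e)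
      have h2 : HasDerivAt (fun t : ℝ => t * t * ((1 / 2) * (w ⬝ᵥ A.mulVec w))) 0 0 := by
        simpa using ((hasDerivAt_id (0:ℝ)).mul (hasDerivAt_id 0)).mul_const
          ((1 / 2) * (w ⬝ᵥ A.mulVec w))
      simpa using (h1.const_add _).fun_sub h2
    have hstat := hβstat v
    rw [hfun] at hstat
    exact hD.unique hstat
  have hvec : Xbᵀ.mulVec (A.mulVec e) = 0 := by
    funext q
    have h0 := hXAe (Pi.single q 1)
    rw [dotProduct_comm, Matrix.dotProduct_mulVec, ← Matrix.mulVec_transpose,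
      dotProduct_single, mul_one] at h0
    simpa using h0
  have hXbe : (Xbᵀ * A).mulVec e = 0 := by
    rw [← Matrix.mulVec_mulVec]
    exact hvec
  have hnormal : (Xbᵀ * A * Xb).mulVec βv = (Xbᵀ * A).mulVec yv := by
    have h1 : (Xbᵀ * A).mulVec (yv - Xb.mulVec βv) = 0 := hXbe
    rw [Matrix.mulVec_sub, sub_eq_zero] at h1
    rw [h1, Matrix.mulVec_mulVec]
  constructor
  · rw [← hnormal, Matrix.mulVec_mulVec, Matrix.nonsing_inv_mul _ hinv, Matrix.one_mulVec]
  -- Part 2: Sigma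
  · set R : Matrix (Fin n) (Fin m) ℝ := Matrix.of fun i j => resid X Y βv i j with hRdef
    have heR : ∀ r : Fin m × Fin n, e r = R r.2 r.1 := by
      intro r
      rw [hedef]
      simp only [Pi.sub_apply, hyvdef, hRdef, Matrix.of_apply, resid]
      congr 1
      rw [hXbdef]
      simp only [Matrix.mulVec, dotProduct, bigXS, Matrix.of_apply]
      rw [← Finset.univ_sigma_univ, Finset.sum_sigma]
      have hterm : ∀ j' : Fin m,
          (∑ k : Fin (pdim j'), (if r.1 = j' then X r.2 ⟨j', k⟩ else 0) * βv ⟨j', k⟩)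
            = if r.1 = j' then ∑ k : Fin (pdim j'), X r.2 ⟨j', k⟩ * βv ⟨j', k⟩ else 0 := by
        intro j'
        split <;> simp
      rw [Finset.sum_congr rfl fun j' _ => hterm j']
      simp
    set Sm : Matrix (Fin m) (Fin m) ℝ :=
      Matrix.of fun j k => ∑ i, e (j, i) * e (k, i) with hSmdef
    have hSmT : Smᵀ = Sm := by
      ext j k
      simp only [Matrix.transpose_apply, hSmdef, Matrix.of_apply]
      exact Finset.sum_congr rfl fun i _ => mul_comm _ _
    have hRS : Rᵀ * R = Sm := by
      ext j k
      simp only [Matrix.mul_apply, Matrix.transpose_apply, hSmdef, Matrix.of_apply]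
      exact Finset.sum_congr rfl fun i _ => by rw [heR (j, i), heR (k, i)]
    -- key stationarity identity
    have hkey : ∀ V : Matrix (Fin m) (Fin m) ℝ, Vᵀ = V →
        Matrix.trace (V * (Sig⁻¹ * Sm * Sig⁻¹ - (n : ℝ) • Sig⁻¹)) = 0 := by
      intro V hV
      have hgfun : (fun t : ℝ => l βv (Sig + t • V)) = fun t : ℝ =>
          -((m : ℝ) * (n : ℝ) / 2) * Real.log (2 * Real.pi)
          - ((n : ℝ) / 2) * Real.log ((Sig + t • V).det)
          - (1 / 2) * ∑ j, ∑ k, ((Sig + t • V)⁻¹ j k) * Sm j k := by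
        funext t
        rw [hl, quadform_aux]
        congr 1
      have hlog : HasDerivAt (fun t : ℝ => Real.log ((Sig + t • V).det))
          ((Sig⁻¹ * V).trace) 0 := by
        have hdet := hasDerivAt_det_aux Sig V hSu
        have h0 : (Sig + (0:ℝ) • V).det ≠ 0 := by simpa using hSdet
        have := hdet.log h0
        have hval : Sig.det * (Sig⁻¹ * V).trace / (Sig + (0:ℝ) • V).det
            = (Sig⁻¹ * V).trace := by
          simp only [zero_smul, add_zero]
          field_simp
        rwa [hval] at this
      have hquad : HasDerivAt (fun t : ℝ => ∑ j, ∑ k, ((Sig + t • V)⁻¹ j k) * Sm j k)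
          (∑ j, ∑ k, (-(Sig⁻¹ * V * Sig⁻¹) j k) * Sm j k) 0 := by
        apply HasDerivAt.fun_sum
        intro j _
        apply HasDerivAt.fun_sum
        intro k _
        exact (hasDerivAt_inv_entry Sig V hSu j k).mul_const (Sm j k)
      have hD : HasDerivAt (fun t : ℝ =>
          -((m : ℝ) * (n : ℝ) / 2) * Real.log (2 * Real.pi)
          - ((n : ℝ) / 2) * Real.log ((Sig + t • V).det)
          - (1 / 2) * ∑ j, ∑ k, ((Sig + t • V)⁻¹ j k) * Sm j k)
          (0 - ((n : ℝ) / 2) * (Sig⁻¹ * V).trace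
            - (1 / 2) * ∑ j, ∑ k, (-(Sig⁻¹ * V * Sig⁻¹) j k) * Sm j k) 0 := by
        exact ((hasDerivAt_const (0:ℝ) _).sub (hlog.const_mul ((n : ℝ) / 2))).sub
          (hquad.const_mul (1 / 2))
      have hstat := hSigstat V hV
      rw [hgfun] at hstat
      have huniq := hD.unique hstat
      have hsum : ∑ j, ∑ k, (-(Sig⁻¹ * V * Sig⁻¹) j k) * Sm j k
          = -∑ j, ∑ k, (Sig⁻¹ * V * Sig⁻¹) j k * Sm j k := by
        simp [neg_mul, Finset.sum_neg_distrib]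
      rw [hsum] at huniq
      have hEq : ∑ j, ∑ k, (Sig⁻¹ * V * Sig⁻¹) j k * Sm j k
          = (n : ℝ) * (Sig⁻¹ * V).trace := by linarith
      have htr1 : ∑ j, ∑ k, (Sig⁻¹ * V * Sig⁻¹) j k * Sm j k
          = Matrix.trace (V * (Sig⁻¹ * Sm * Sig⁻¹)) := by
        rw [← trace_mul_transpose_sum, hSmT]
        rw [show Sig⁻¹ * V * Sig⁻¹ * Sm = (Sig⁻¹ * V) * (Sig⁻¹ * Sm) by
          rw [Matrix.mul_assoc (Sig⁻¹ * V)]]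
        rw [Matrix.trace_mul_comm]
        rw [show Sig⁻¹ * Sm * (Sig⁻¹ * V) = (Sig⁻¹ * Sm * Sig⁻¹) * V by
          rw [Matrix.mul_assoc (Sig⁻¹ * Sm)]]
        rw [Matrix.trace_mul_comm, Matrix.mul_assoc]
      have htr2 : (n : ℝ) * (Sig⁻¹ * V).trace = Matrix.trace (V * ((n : ℝ) • Sig⁻¹)) := by
        rw [Matrix.mul_smul, Matrix.trace_smul, Matrix.trace_mul_comm, smul_eq_mul]
      rw [Matrix.mul_sub, Matrix.trace_sub, ← htr1, ← htr2, hEq, sub_self]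
    -- conclude G = 0
    set G : Matrix (Fin m) (Fin m) ℝ := Sig⁻¹ * Sm * Sig⁻¹ - (n : ℝ) • Sig⁻¹ with hGdef
    have hGsym : Gᵀ = G := by
      rw [hGdef, Matrix.transpose_sub, Matrix.transpose_smul, hSigInvT,
        Matrix.transpose_mul, Matrix.transpose_mul, hSigInvT, hSmT, Matrix.mul_assoc]
    have hG0 : G = 0 := by
      ext a b
      set V : Matrix (Fin m) (Fin m) ℝ := Matrix.of fun x y =>
        (if x = a ∧ y = b then (1:ℝ) else 0) + (if x = b ∧ y = a then 1 else 0) with hVdef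
      have hVsym : Vᵀ = V := by
        ext x y
        simp only [Matrix.transpose_apply, hVdef, Matrix.of_apply]
        rw [add_comm]
        congr 1 <;> · apply if_congr _ rfl rfl; constructor <;> exact fun h => ⟨h.2, h.1⟩
      have htr := hkey V hVsym
      have htrval : Matrix.trace (V * G) = G b a + G a b := by
        simp only [Matrix.trace, Matrix.diag_apply, Matrix.mul_apply, hVdef, Matrix.of_apply,
          add_mul, ite_mul, one_mul, zero_mul, Finset.sum_add_distrib, ite_and]
        rw [Finset.sum_comm]
        simp [Finset.sum_ite_eq, Finset.sum_ite_eq']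
      rw [htrval] at htr
      have hba : G b a = G a b := by
        have := congrFun (congrFun hGsym a) b
        simpa [Matrix.transpose_apply] using this
      rw [hba] at htr
      have : G a b = 0 := by linarith
      simpa using this
    have hSm : Sm = (n : ℝ) • Sig := by
      have h1 : Sig⁻¹ * Sm * Sig⁻¹ = (n : ℝ) • Sig⁻¹ := by
        have := sub_eq_zero.mp (hGdef ▸ hG0)
        exact this
      have h2 := congrArg (fun P => Sig * P * Sig) h1
      rw [show Sig * (Sig⁻¹ * Sm * Sig⁻¹) * Sig = (Sig * (Sig⁻¹ * (Sm * Sig⁻¹))) * Sig by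
        rw [Matrix.mul_assoc Sig⁻¹ Sm]] at h2
      rw [Matrix.mul_nonsing_inv_cancel_left _ _ hSu,
        Matrix.nonsing_inv_mul_cancel_right _ _ hSu] at h2
      rw [Matrix.mul_smul, Matrix.smul_mul, Matrix.mul_nonsing_inv _ hSu, Matrix.one_mul] at h2
      exact h2
    rw [hRS, hSm, smul_smul, inv_mul_cancel₀ hnR, one_smul]
end
end

section
/- Gradient of the M-scale with respect to the regression coefficients, and its vanishing at the S-estimator (consistency condition, appendix). Let ρ₀ be a ρ-function, ψ₀ = ρ₀', w₀(u) = ψ₀(u)/u, 0 < δ₀ < ρ₀(c₀), fix a symmetric positive definite G ∈ ℝ^{m×m} and set φ(G⁻¹) = det(G⁻¹)^{−1/m} G⁻¹. Let b₀ ∈ ℝ^p and let s be a function, defined and differentiable on a neighborhood of b₀ with positive values, such that (1/n) Σ_{i=1}^n ρ₀(√(e_i(b)ᵀ φ(G⁻¹) e_i(b)) / s(b)) = δ₀ for all b in that neighborhood, where e_i(b) = ỹ_i − x_i b with ỹ_i ∈ ℝ^m the i-th rows of Y and x_i ∈ ℝ^{m×p} the block-diagonal arrangement of the i-th observation's regressors.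 Set d_i = √(e_i(b₀)ᵀ φ(G⁻¹) e_i(b₀))/s(b₀), assume d_i > 0 for all i and Σ_{i=1}^n ψ₀(d_i) d_i ≠ 0. Then the gradient of s at b₀ equals ∇s(b₀) = −(Σ_{i=1}^n w₀(d_i) x_iᵀ φ(G⁻¹) e_i(b₀)) / (s(b₀) Σ_{i=1}^n ψ₀(d_i) d_i). In particular, if the S estimating equation Σ_{i=1}^n w₀(d_i) x_iᵀ φ(G⁻¹) e_i(b₀) = 0 holds, then ∇s(b₀) = 0. -/
open Matrix

noncomputable section

lemma quad_hasDerivAt {m : ℕ} (M : Matrix (Fin m) (Fin m) ℝ) (a u : Fin m → ℝ) :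
    HasDerivAt (fun t : ℝ => (a - t • u) ⬝ᵥ M.mulVec (a - t • u))
      (-(a ⬝ᵥ M.mulVec u) - u ⬝ᵥ M.mulVec a) 0 := by
  have hfun : (fun t : ℝ => (a - t • u) ⬝ᵥ M.mulVec (a - t • u))
      = fun t : ℝ => a ⬝ᵥ M.mulVec a - t * (a ⬝ᵥ M.mulVec u + u ⬝ᵥ M.mulVec a)
          + t * t * (u ⬝ᵥ M.mulVec u) := by
    funext t
    simp only [sub_dotProduct, dotProduct_sub, Matrix.mulVec_sub,
      Matrix.mulVec_smul, smul_dotProduct, dotProduct_smul, smul_eq_mul]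
    ring
  rw [hfun]
  have h1 : HasDerivAt (fun t : ℝ => t * (a ⬝ᵥ M.mulVec u + u ⬝ᵥ M.mulVec a))
      (a ⬝ᵥ M.mulVec u + u ⬝ᵥ M.mulVec a) 0 := by
    simpa using (hasDerivAt_id (0:ℝ)).mul_const _
  have h2 : HasDerivAt (fun t : ℝ => t * t * (u ⬝ᵥ M.mulVec u)) 0 0 := by
    simpa using ((hasDerivAt_id (0:ℝ)).mul (hasDerivAt_id 0)).mul_const (u ⬝ᵥ M.mulVec u)
  have := ((hasDerivAt_const (0:ℝ) (a ⬝ᵥ M.mulVec a)).sub h1).add h2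
  exact this.congr_deriv (by ring)

lemma sum_dotProduct' {ι κ : Type*} [Fintype κ] (f : ι → κ → ℝ) (t : Finset ι) (v : κ → ℝ) :
    (∑ i ∈ t, f i) ⬝ᵥ v = ∑ i ∈ t, f i ⬝ᵥ v := by
  simp only [dotProduct, Finset.sum_apply, Finset.sum_mul]
  exact Finset.sum_comm

lemma symm_dot {m : ℕ} (M : Matrix (Fin m) (Fin m) ℝ) (hM : Mᵀ = M) (a u : Fin m → ℝ) :
    u ⬝ᵥ M.mulVec a = a ⬝ᵥ M.mulVec u := by
  rw [Matrix.dotProduct_mulVec, ← Matrix.mulVec_transpose, hM, dotProduct_comm]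

/-- **Gradient of the M-scale with respect to the regression coefficients, and its
vanishing at the S-estimator** (consistency condition, appendix):
`∇s(b₀) = −(Σᵢ w₀(dᵢ) xᵢᵀ φ(G⁻¹) eᵢ(b₀)) / (s(b₀) Σᵢ ψ₀(dᵢ)dᵢ)`; in particular the
gradient vanishes when the S estimating equation holds. -/
theorem M_scale_gradient_in_b
    {n m : ℕ} (hm : 1 < m) {pdim : Fin m → ℕ}
    (ρ₀ : ℝ → ℝ) (c₀ : ℝ) (hρ₀ : IsRhoFunction ρ₀ c₀)
    (δ₀ : ℝ) (hδ : 0 < δ₀ ∧ δ₀ < ρ₀ c₀)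
    (w₀ : ℝ → ℝ) (hw₀ : ∀ u : ℝ, u ≠ 0 → w₀ u = deriv ρ₀ u / u)
    -- the fixed shape matrix G and φ(G⁻¹) = det(G⁻¹)^{−1/m} G⁻¹
    (G : Matrix (Fin m) (Fin m) ℝ) (hG : G.PosDef)
    (φG : Matrix (Fin m) (Fin m) ℝ)
    (hφG : φG = (G⁻¹.det ^ (-(1 : ℝ) / (m : ℝ))) • G⁻¹)
    -- the data: i-th response row and block-diagonal arrangement of the i-th regressors
    (yt : Fin n → Fin m → ℝ) (x : Fin n → Matrix (Fin m) (SURIdx m pdim) ℝ)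
    (hx : ∀ (i : Fin n) (j : Fin m) (q : SURIdx m pdim), q.1 ≠ j → x i j q = 0)
    -- the M-scale s, positive and differentiable near b₀, satisfying the defining
    -- equation on a neighborhood of b₀
    (b₀ : SURIdx m pdim → ℝ)
    (s : (SURIdx m pdim → ℝ) → ℝ)
    (U : Set (SURIdx m pdim → ℝ)) (hU : U ∈ nhds b₀)
    (hpos : ∀ bb ∈ U, 0 < s bb)
    (hdiff : ∀ bb ∈ U, DifferentiableAt ℝ s bb)
    (hcons : ∀ bb ∈ U,
      (1 / (n : ℝ)) * ∑ i, ρ₀ (Real.sqrt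
        ((yt i - (x i).mulVec bb) ⬝ᵥ φG.mulVec (yt i - (x i).mulVec bb)) / s bb) = δ₀)
    -- the distances dᵢ, assumed positive, with nonvanishing Σᵢ ψ₀(dᵢ)dᵢ
    (d : Fin n → ℝ)
    (hd : ∀ i, d i = Real.sqrt
      ((yt i - (x i).mulVec b₀) ⬝ᵥ φG.mulVec (yt i - (x i).mulVec b₀)) / s b₀)
    (hdpos : ∀ i, 0 < d i)
    (hsum : ∑ i, deriv ρ₀ (d i) * d i ≠ 0) :
    (∀ v : SURIdx m pdim → ℝ,
      fderiv ℝ s b₀ v = (-1 / (s b₀ * ∑ i, deriv ρ₀ (d i) * d i)) *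
        ((∑ i, w₀ (d i) • ((x i)ᵀ.mulVec (φG.mulVec (yt i - (x i).mulVec b₀)))) ⬝ᵥ v)) ∧
    ((∑ i, w₀ (d i) • ((x i)ᵀ.mulVec (φG.mulVec (yt i - (x i).mulVec b₀)))) = 0 →
      fderiv ℝ s b₀ = 0) := by
  have hb0U : b₀ ∈ U := mem_of_mem_nhds hU
  have hs0 : 0 < s b₀ := hpos b₀ hb0U
  have hs0ne : s b₀ ≠ 0 := ne_of_gt hs0
  have hn : (n : ℝ) ≠ 0 := by
    rintro hn0
    have : n = 0 := by exact_mod_cast hn0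
    subst this
    simp at hsum
  -- symmetry of φG
  have hGt : Gᵀ = G := by
    have := hG.1
    simpa [Matrix.IsHermitian] using this
  have hφsym : φGᵀ = φG := by
    rw [hφG, Matrix.transpose_smul, Matrix.transpose_nonsing_inv, hGt]
  -- differentiability of ρ₀
  have hψ : ∀ z : ℝ, HasDerivAt ρ₀ (deriv ρ₀ z) z := fun z =>
    ((hρ₀.2.2.1.differentiable (by norm_num)) z).hasDerivAt
  set s0 := s b₀ with hs0def
  set A : Fin n → (Fin m → ℝ) := fun i => yt i - (x i).mulVec b₀ with hAdef
  set Q0 : Fin n → ℝ := fun i => A i ⬝ᵥ φG.mulVec (A i) with hQ0def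
  have hsqQ0 : ∀ i, Real.sqrt (Q0 i) = d i * s0 := by
    intro i
    rw [hd i, div_mul_cancel₀ _ hs0ne]
  have hQ0ne : ∀ i, Q0 i ≠ 0 := by
    intro i h
    have h1 : Real.sqrt (Q0 i) = 0 := by rw [h]; simp
    rw [hsqQ0 i] at h1
    exact absurd h1 (mul_ne_zero (ne_of_gt (hdpos i)) hs0ne)
  set L := fderiv ℝ s b₀ with hLdef
  have main : ∀ v : SURIdx m pdim → ℝ,
      L v = (-1 / (s0 * ∑ i, deriv ρ₀ (d i) * d i)) *
        ((∑ i, w₀ (d i) • ((x i)ᵀ.mulVec (φG.mulVec (A i)))) ⬝ᵥ v) := by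
    intro v
    set u : Fin n → (Fin m → ℝ) := fun i => (x i).mulVec v with hudef
    set k : Fin n → ℝ := fun i => A i ⬝ᵥ φG.mulVec (u i) with hkdef
    have heq : ∀ i (t : ℝ), yt i - (x i).mulVec (b₀ + t • v) = A i - t • u i := by
      intro i t
      simp only [hAdef, hudef, Matrix.mulVec_add, Matrix.mulVec_smul]
      abel
    have hγ0 : b₀ + (0:ℝ) • v = b₀ := by simp
    -- derivative of s along the line
    have hsγ : HasDerivAt (fun t : ℝ => s (b₀ + t • v)) (L v) 0 := by
      have hline : HasDerivAt (fun t : ℝ => b₀ + t • v) v 0 := by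
        simpa using ((hasDerivAt_id (0:ℝ)).smul_const v).const_add b₀
      have hs' : HasFDerivAt s L (b₀ + (0:ℝ) • v) := by
        rw [hγ0]; exact (hdiff b₀ hb0U).hasFDerivAt
      exact hs'.comp_hasDerivAt 0 hline
    -- per-observation derivative
    have key : ∀ i : Fin n, HasDerivAt (fun t : ℝ => ρ₀ (Real.sqrt
        ((yt i - (x i).mulVec (b₀ + t • v)) ⬝ᵥ φG.mulVec (yt i - (x i).mulVec (b₀ + t • v)))
          / s (b₀ + t • v)))
        (deriv ρ₀ (d i) *
          (((-(k i) - u i ⬝ᵥ φG.mulVec (A i)) / (2 * (d i * s0)) * s0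
            - d i * s0 * L v) / s0 ^ 2)) 0 := by
      intro i
      have hQ : HasDerivAt (fun t : ℝ =>
          (yt i - (x i).mulVec (b₀ + t • v)) ⬝ᵥ φG.mulVec (yt i - (x i).mulVec (b₀ + t • v)))
          (-(k i) - u i ⬝ᵥ φG.mulVec (A i)) 0 := by
        simp only [heq i]
        exact quad_hasDerivAt φG (A i) (u i)
      have hQ0' : (yt i - (x i).mulVec (b₀ + (0:ℝ) • v)) ⬝ᵥ
          φG.mulVec (yt i - (x i).mulVec (b₀ + (0:ℝ) • v)) = Q0 i := by
        rw [heq i]; simp; rfl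
      have hsq := hQ.sqrt (by rw [hQ0']; exact hQ0ne i)
      have hdiv := hsq.div hsγ (by rw [hγ0]; exact hs0ne)
      have hcomp := (hψ _).comp 0 hdiv
      have hrearr : Real.sqrt
          ((yt i - (x i).mulVec (b₀ + (0:ℝ) • v)) ⬝ᵥ
            φG.mulVec (yt i - (x i).mulVec (b₀ + (0:ℝ) • v))) / s (b₀ + (0:ℝ) • v) = d i := by
        rw [hQ0', hγ0, hsqQ0 i]
        field_simp
        exact mul_div_cancel_right₀ _ hs0ne
      simp only [Pi.div_apply, Function.comp_def] at hcomp
      rw [hrearr] at hcomp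
      refine hcomp.congr_deriv ?_
      rw [hQ0', hγ0, hsqQ0 i]
    -- the total derivative of the constant constraint
    have htot := (HasDerivAt.sum (fun i (_ : i ∈ Finset.univ) => key i)).const_mul (1 / (n:ℝ))
    have hev : (fun t : ℝ => (1 / (n:ℝ)) * ∑ i, ρ₀ (Real.sqrt
        ((yt i - (x i).mulVec (b₀ + t • v)) ⬝ᵥ φG.mulVec (yt i - (x i).mulVec (b₀ + t • v)))
          / s (b₀ + t • v))) =ᶠ[nhds (0:ℝ)] fun _ => δ₀ := by
      have hc : ContinuousAt (fun t : ℝ => b₀ + t • v) 0 :=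
        (continuous_const.add (continuous_id.smul continuous_const)).continuousAt
      have hpre : (fun t : ℝ => b₀ + t • v) ⁻¹' U ∈ nhds (0:ℝ) := by
        apply hc.preimage_mem_nhds
        rw [hγ0]; exact hU
      filter_upwards [hpre] with t ht using hcons _ ht
    have hzero : (1 / (n:ℝ)) * ∑ i, deriv ρ₀ (d i) *
        (((-(k i) - u i ⬝ᵥ φG.mulVec (A i)) / (2 * (d i * s0)) * s0
          - d i * s0 * L v) / s0 ^ 2) = 0 := by
      simp only [Finset.sum_apply] at htot
      have h2 := htot.congr_of_eventuallyEq hev.symm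
      exact h2.unique (hasDerivAt_const 0 δ₀)
    have hEq : ∑ i, deriv ρ₀ (d i) *
        (((-(k i) - u i ⬝ᵥ φG.mulVec (A i)) / (2 * (d i * s0)) * s0
          - d i * s0 * L v) / s0 ^ 2) = 0 := by
      rcases mul_eq_zero.1 hzero with h | h
      · exact absurd h (by positivity)
      · exact h
    -- rewrite each term
    have hterm : ∀ i : Fin n, deriv ρ₀ (d i) *
        (((-(k i) - u i ⬝ᵥ φG.mulVec (A i)) / (2 * (d i * s0)) * s0
          - d i * s0 * L v) / s0 ^ 2)
        = (-(1 / s0 ^ 2)) * ((deriv ρ₀ (d i) / d i) * k i)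
          + (-(L v / s0)) * (deriv ρ₀ (d i) * d i) := by
      intro i
      have hsymm : u i ⬝ᵥ φG.mulVec (A i) = k i := symm_dot φG hφsym (A i) (u i)
      rw [hsymm]
      have hdne : d i ≠ 0 := ne_of_gt (hdpos i)
      field_simp
      ring
    rw [Finset.sum_congr rfl (fun i _ => hterm i), Finset.sum_add_distrib,
      ← Finset.mul_sum, ← Finset.mul_sum] at hEq
    -- identify the target dot product
    have hT : (∑ i, w₀ (d i) • ((x i)ᵀ.mulVec (φG.mulVec (A i)))) ⬝ᵥ v
        = ∑ i, (deriv ρ₀ (d i) / d i) * k i := by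
      rw [sum_dotProduct']
      refine Finset.sum_congr rfl fun i _ => ?_
      rw [smul_dotProduct, smul_eq_mul, hw₀ (d i) (ne_of_gt (hdpos i))]
      congr 1
      rw [Matrix.mulVec_transpose, ← Matrix.dotProduct_mulVec, dotProduct_comm]
      exact symm_dot φG hφsym (A i) (u i)
    rw [hT]
    set S := ∑ i, deriv ρ₀ (d i) * d i with hSdef
    set W := ∑ i, deriv ρ₀ (d i) / d i * k i with hWdef
    have hSne : S ≠ 0 := hsum
    have hEq' : W * s0 + L v * S * s0 ^ 2 = 0 := by
      field_simp at hEq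
      linear_combination (-s0) * hEq
    rw [div_mul_eq_mul_div, neg_one_mul, eq_div_iff (mul_ne_zero hs0ne hSne)]
    apply mul_right_cancel₀ hs0ne
    linear_combination hEq' 
  refine ⟨main, fun h0 => ?_⟩
  ext v
  have := main v
  rw [h0] at this
  simpa using this
end
end

section
/- Vanishing of the derivative of the M-scale with respect to the shape matrix at the S-estimator (consistency condition, appendix). Let ρ₀ be a ρ-function, ψ₀ = ρ₀', w₀(u) = ψ₀(u)/u, 0 < δ₀ < ρ₀(c₀), and set φ(A) = det(A)^{−1/m} A for invertible m×m matrices A. Fix residuals e₁,…,e_n ∈ ℝ^m (e_i = e_i(b₀) for a fixed coefficient vector b₀). Let G₀ be symmetric positive definite and let s be a function, defined and Fréchet-differentiable on a neighborhood of G₀ in the space of symmetric m×m matrices with positive values, such that (1/n) Σ_{i=1}^n ρ₀(√(e_iᵀ φ(G⁻¹) e_i) / s(G)) = δ₀ for all symmetric positive definite G in that neighborhood. Set d_i = √(e_iᵀ φ(G₀⁻¹) e_i)/s(G₀), assume d_i > 0 for all i and Σ_{i=1}^n ψ₀(d_i) d_i ≠ 0, and assume the scatter estimating equation Σ_{i=1}^n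 w₀(d_i) e_i e_iᵀ = (s(G₀)² Σ_{i=1}^n ψ₀(d_i) d_i / m) · det(G₀)^{−1/m} G₀ holds. Then the Fréchet derivative of s at G₀ is zero. -/
open Matrix

noncomputable section

/-- The space of symmetric `m × m` real matrices, as a submodule of `Fin m → Fin m → ℝ`. -/
def symMat (m : ℕ) : Submodule ℝ (Fin m → Fin m → ℝ) where
  carrier := {A | ∀ i j, A i j = A j i}
  add_mem' := by
    intro a b ha hb i j
    simp [ha i j, hb i j]
  zero_mem' := by intro i j; rfl
  smul_mem' := by
    intro c a ha i j
    simp [ha i j]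

/-- `φ(A) = det(A)^{−1/m} A`. -/
def phiMat {m : ℕ} (A : Matrix (Fin m) (Fin m) ℝ) : Matrix (Fin m) (Fin m) ℝ :=
  (A.det ^ (-(1 : ℝ) / (m : ℝ))) • A

lemma trace_mul_vecMulVec {m : ℕ} (M : Matrix (Fin m) (Fin m) ℝ) (x : Fin m → ℝ) :
    (M * vecMulVec x x).trace = x ⬝ᵥ M.mulVec x := by
  simp only [Matrix.trace, Matrix.diag, Matrix.mul_apply, Matrix.vecMulVec_apply,
    Matrix.mulVec, dotProduct, Finset.mul_sum]
  exact Finset.sum_congr rfl fun i _ => Finset.sum_congr rfl fun j _ => by ring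

/-- The quadratic form `M ↦ xᵀ M x` as a linear map in `M`. -/
def quadLM {m : ℕ} (x : Fin m → ℝ) : Matrix (Fin m) (Fin m) ℝ →ₗ[ℝ] ℝ where
  toFun M := x ⬝ᵥ M.mulVec x
  map_add' M N := by simp [Matrix.add_mulVec, dotProduct_add]
  map_smul' a M := by simp [Matrix.smul_mulVec, dotProduct_smul]

lemma quad_smul {m : ℕ} (M : Matrix (Fin m) (Fin m) ℝ) (a : ℝ) (y : Fin m → ℝ) :
    (a • y) ⬝ᵥ M.mulVec (a • y) = a ^ 2 * (y ⬝ᵥ M.mulVec y) := by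
  simp [Matrix.mulVec_smul, smul_dotProduct, dotProduct_smul, smul_eq_mul]
  ring

lemma quad_continuous {m : ℕ} (M : Matrix (Fin m) (Fin m) ℝ) :
    Continuous fun x : Fin m → ℝ => x ⬝ᵥ M.mulVec x := by
  have : (fun x : Fin m → ℝ => x ⬝ᵥ M.mulVec x)
      = fun x => ∑ i, x i * ∑ j, M i j * x j := by
    funext x; simp [dotProduct, Matrix.mulVec]
  rw [this]
  exact continuous_finset_sum _ fun i _ => (continuous_apply i).mul
    (continuous_finset_sum _ fun j _ => continuous_const.mul (continuous_apply j))

lemma posdef_line {m : ℕ} (hm : 0 < m) (G K : Matrix (Fin m) (Fin m) ℝ)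
    (hG : G.PosDef) (hK : K.IsHermitian) :
    ∀ᶠ t : ℝ in nhds 0, (G + t • K).PosDef := by
  haveI : Nonempty (Fin m) := ⟨⟨0, hm⟩⟩
  set f := fun x : Fin m → ℝ => x ⬝ᵥ G.mulVec x with hf
  set g := fun x : Fin m → ℝ => x ⬝ᵥ K.mulVec x with hg
  have hne : (Metric.sphere (0 : Fin m → ℝ) 1).Nonempty :=
    NormedSpace.sphere_nonempty.mpr zero_le_one
  obtain ⟨x₀, hx₀, hmin⟩ := (isCompact_sphere (0 : Fin m → ℝ) 1).exists_isMinOn hne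
    (quad_continuous G).continuousOn
  obtain ⟨x₁, hx₁, hmax⟩ := (isCompact_sphere (0 : Fin m → ℝ) 1).exists_isMaxOn hne
    ((quad_continuous K).abs.continuousOn)
  set c := f x₀ with hc
  set C := |g x₁| with hC
  have hcpos : 0 < c := by
    have hx₀ne : x₀ ≠ 0 := by
      intro h
      rw [mem_sphere_zero_iff_norm] at hx₀
      simp [h] at hx₀
    simpa [hf, star_trivial] using (Matrix.posDef_iff_dotProduct_mulVec.mp hG).2 hx₀ne
  have hCnn : 0 ≤ C := abs_nonneg _
  have hεpos : 0 < c / (C + 1) := by positivity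
  filter_upwards [Metric.ball_mem_nhds (0 : ℝ) hεpos] with t ht
  rw [Metric.mem_ball, Real.dist_eq, sub_zero] at ht
  refine Matrix.posDef_iff_dotProduct_mulVec.mpr ⟨?_, ?_⟩
  · apply Matrix.IsHermitian.ext
    intro i j
    simp only [Matrix.add_apply, Matrix.smul_apply, star_trivial, smul_eq_mul]
    have h1 : G j i = G i j := by simpa using hG.1.apply i j
    have h2 : K j i = K i j := by simpa using hK.apply i j
    rw [h1, h2]
  · intro x hx
    have hxn : 0 < ‖x‖ := norm_pos_iff.mpr hx
    set a := ‖x‖ with ha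
    set y := a⁻¹ • x with hy
    have hyx : x = a • y := by
      rw [hy, smul_smul, mul_inv_cancel₀ hxn.ne', one_smul]
    have hymem : y ∈ Metric.sphere (0 : Fin m → ℝ) 1 := by
      rw [mem_sphere_zero_iff_norm, hy, norm_smul, norm_inv, ha, norm_norm]
      exact inv_mul_cancel₀ hxn.ne'
    have hquad : x ⬝ᵥ (G + t • K).mulVec x = a ^ 2 * (f y + t * g y) := by
      rw [hyx, quad_smul, Matrix.add_mulVec, dotProduct_add, Matrix.smul_mulVec,
        dotProduct_smul]
      simp [hf, hg, smul_eq_mul]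
    have h1 : c ≤ f y := hmin hymem
    have h2 : |g y| ≤ C := hmax hymem
    have h3 : 0 < f y + t * g y := by
      have h5 : |t * g y| ≤ |t| * C := by
        rw [abs_mul]
        exact mul_le_mul_of_nonneg_left h2 (abs_nonneg t)
      have h4 : |t| * C < c := by
        have := mul_lt_mul_of_pos_right ht (by positivity : (0:ℝ) < C + 1)
        rw [div_mul_cancel₀ _ (by positivity : (C:ℝ) + 1 ≠ 0)] at this
        nlinarith [abs_nonneg t]
      nlinarith [neg_abs_le (t * g y)]
    have : (0:ℝ) < a ^ 2 * (f y + t * g y) := by positivity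
    simpa [star_trivial, hquad] using this

lemma symMat_isHermitian {m : ℕ} (G : symMat m) :
    (Matrix.of (G : Fin m → Fin m → ℝ)).IsHermitian :=
  Matrix.IsHermitian.ext fun i j => by simpa [Matrix.of_apply] using (G.2 j i)


set_option maxHeartbeats 1000000 in
/-- **Vanishing of the derivative of the M-scale with respect to the shape matrix at the
S-estimator** (consistency condition, appendix): if the M-scale `s(G)` is defined on a
neighborhood of `G₀` in the space of symmetric matrices by
`(1/n) Σᵢ ρ₀(√(eᵢᵀ φ(G⁻¹) eᵢ)/s(G)) = δ₀` and the scatter estimating equation holds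
at `G₀`, then the Fréchet derivative of `s` at `G₀` is zero. -/
theorem M_scale_derivative_in_shape_vanishes
    {n m : ℕ} (hm : 1 < m)
    (ρ₀ : ℝ → ℝ) (c₀ : ℝ) (hρ₀ : IsRhoFunction ρ₀ c₀)
    (δ₀ : ℝ) (hδ : 0 < δ₀ ∧ δ₀ < ρ₀ c₀)
    (w₀ : ℝ → ℝ) (hw₀ : ∀ u : ℝ, u ≠ 0 → w₀ u = deriv ρ₀ u / u)
    -- the fixed residuals e₁, …, e_n
    (e : Fin n → Fin m → ℝ)
    -- the symmetric positive definite base point G₀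
    (G₀ : symMat m) (hG₀ : (Matrix.of (G₀ : Fin m → Fin m → ℝ)).PosDef)
    -- the M-scale s, positive and Fréchet-differentiable near G₀ in the space of
    -- symmetric matrices, satisfying the defining equation for all symmetric positive
    -- definite G in a neighborhood of G₀
    (s : symMat m → ℝ)
    (U : Set (symMat m)) (hU : U ∈ nhds G₀)
    (hpos : ∀ G ∈ U, 0 < s G)
    (hdiff : ∀ G ∈ U, DifferentiableAt ℝ s G)
    (hcons : ∀ G ∈ U, (Matrix.of (G : Fin m → Fin m → ℝ)).PosDef →
      (1 / (n : ℝ)) * ∑ i, ρ₀ (Real.sqrt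
        (e i ⬝ᵥ (phiMat (Matrix.of (G : Fin m → Fin m → ℝ))⁻¹).mulVec (e i)) / s G) = δ₀)
    -- the distances dᵢ, assumed positive, with nonvanishing Σᵢ ψ₀(dᵢ)dᵢ
    (d : Fin n → ℝ)
    (hd : ∀ i, d i = Real.sqrt
      (e i ⬝ᵥ (phiMat (Matrix.of (G₀ : Fin m → Fin m → ℝ))⁻¹).mulVec (e i)) / s G₀)
    (hdpos : ∀ i, 0 < d i)
    (hsum : ∑ i, deriv ρ₀ (d i) * d i ≠ 0)
    -- the scatter estimating equation at G₀
    (hesteq : ∑ i, w₀ (d i) • vecMulVec (e i) (e i) =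
      ((s G₀ ^ 2 * ∑ i, deriv ρ₀ (d i) * d i) / (m : ℝ)) •
        (((Matrix.of (G₀ : Fin m → Fin m → ℝ)).det ^ (-(1 : ℝ) / (m : ℝ))) •
          Matrix.of (G₀ : Fin m → Fin m → ℝ))) :
    fderiv ℝ s G₀ = 0 := by
  classical
  obtain ⟨hc0, hρeven, hρC2, hρzero, hρmono, hρconst⟩ := hρ₀
  have hρdiff : ∀ x : ℝ, HasDerivAt ρ₀ (deriv ρ₀ x) x := fun x =>
    ((hρC2.differentiable two_ne_zero) x).hasDerivAt
  have hn : n ≠ 0 := by rintro rfl; simp at hsum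
  have hnR : (n : ℝ) ≠ 0 := Nat.cast_ne_zero.mpr hn
  have hmR : (m : ℝ) ≠ 0 := Nat.cast_ne_zero.mpr (by omega)
  letI : NormedRing (Matrix (Fin m) (Fin m) ℝ) := Matrix.linftyOpNormedRing
  letI : NormedAlgebra ℝ (Matrix (Fin m) (Fin m) ℝ) := Matrix.linftyOpNormedAlgebra
  letI : CompleteSpace (Matrix (Fin m) (Fin m) ℝ) := FiniteDimensional.complete ℝ _
  set s₀ := s G₀ with hs₀def
  have hG₀U : G₀ ∈ U := mem_of_mem_nhds hU
  have hs₀ : 0 < s₀ := hpos G₀ hG₀U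
  apply ContinuousLinearMap.ext
  intro H
  rw [ContinuousLinearMap.zero_apply]
  set L := fderiv ℝ s G₀ H with hL
  set Gm := Matrix.of (G₀ : Fin m → Fin m → ℝ) with hGm
  set Hm := Matrix.of ((H : symMat m) : Fin m → Fin m → ℝ) with hHm
  have hGmPD : Gm.PosDef := hG₀
  have hGdu : IsUnit Gm.det := hGmPD.det_pos.ne'.isUnit
  have hGu : IsUnit Gm := (Matrix.isUnit_iff_isUnit_det Gm).mpr hGdu
  set A : ℝ → Matrix (Fin m) (Fin m) ℝ := fun t => Gm + t • Hm with hA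
  have hA0 : A 0 = Gm := by simp [hA]
  set γ : ℝ → symMat m := fun t => G₀ + t • H with hγ
  have hγ0 : γ 0 = G₀ := by simp [hγ]
  have hγA : ∀ t, Matrix.of ((γ t : symMat m) : Fin m → Fin m → ℝ) = A t := by
    intro t
    ext i j
    simp [hγ, hA, hGm, hHm, Matrix.of_apply, Matrix.add_apply, Matrix.smul_apply]
  have hγd : HasDerivAt γ H 0 := by
    have h1 : HasDerivAt (fun t : ℝ => t • H) ((1:ℝ) • H) 0 :=
      (hasDerivAt_id (0:ℝ)).smul_const H
    simpa [hγ] using h1.const_add G₀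
  have hAd : HasDerivAt A Hm 0 := by
    have h1 : HasDerivAt (fun t : ℝ => t • Hm) ((1:ℝ) • Hm) 0 :=
      (hasDerivAt_id (0:ℝ)).smul_const Hm
    have h2 := h1.const_add Gm
    rw [one_smul] at h2
    exact h2
  have hσd : HasDerivAt (fun t => s (γ t)) L 0 := by
    have h1 : HasFDerivAt s (fderiv ℝ s G₀) (γ 0) := hγ0 ▸ (hdiff G₀ hG₀U).hasFDerivAt
    exact h1.comp_hasDerivAt 0 hγd
  set Iv : ℝ → Matrix (Fin m) (Fin m) ℝ := fun t => (A t)⁻¹ with hIv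
  have hIv0 : Iv 0 = Gm⁻¹ := by simp only [hIv]; rw [hA0]
  set N : Matrix (Fin m) (Fin m) ℝ := -(Gm⁻¹ * Hm * Gm⁻¹) with hN
  have hIvd : HasDerivAt Iv N 0 := by
    have hGu0 : IsUnit (A 0) := hA0 ▸ hGu
    have hinv := hasFDerivAt_ringInverse (𝕜 := ℝ) hGu0.unit
    rw [hGu0.unit_spec] at hinv
    have h2 := hinv.comp_hasDerivAt 0 hAd
    have h3 : Iv = fun t => Ring.inverse (A t) :=
      funext fun t => Matrix.nonsing_inv_eq_ringInverse (A t)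
    have h4 : (-(ContinuousLinearMap.mulLeftRight ℝ (Matrix (Fin m) (Fin m) ℝ)
        (↑hGu0.unit⁻¹) (↑hGu0.unit⁻¹))) Hm = N := by
      rw [ContinuousLinearMap.neg_apply, ContinuousLinearMap.mulLeftRight_apply,
        Matrix.coe_units_inv, hGu0.unit_spec, hA0]
    rw [h3]
    exact h4 ▸ h2
  have hbd : ∀ i : Fin n, HasDerivAt (fun t => e i ⬝ᵥ (Iv t).mulVec (e i))
      (e i ⬝ᵥ N.mulVec (e i)) 0 := by
    intro i
    have hΦ := ((quadLM (e i)).toContinuousLinearMap.hasFDerivAt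
      (x := Iv 0)).comp_hasDerivAt 0 hIvd
    exact hΦ
  set D : ℝ → ℝ := fun t => (A t).det with hD
  set D0 : ℝ := Gm.det with hD0
  have hD00 : D 0 = D0 := by simp only [hD]; rw [hA0]
  have hD0pos : 0 < D0 := hGmPD.det_pos
  set B : Matrix (Fin m) (Fin m) ℝ := Gm⁻¹ * Hm with hB
  set τ : ℝ := B.trace with hτ
  set P : Polynomial ℝ :=
    (Matrix.det (1 + (Polynomial.X : Polynomial ℝ) • B.map Polynomial.C)).divX.divX with hP
  have hfact : ∀ t, D t = D0 * (1 + τ * t + Polynomial.eval t P * t ^ 2) := by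
    intro t
    have h1 : A t = Gm * (1 + t • B) := by
      rw [Matrix.mul_add, Matrix.mul_one, mul_smul_comm, hB, ← Matrix.mul_assoc,
        Matrix.mul_nonsing_inv _ hGdu, Matrix.one_mul]
    simp only [hD]
    rw [h1, Matrix.det_mul, Matrix.det_one_add_smul t B]
  have hpoly : HasDerivAt (fun t : ℝ => 1 + τ * t + Polynomial.eval t P * t ^ 2) τ 0 := by
    have h1 : HasDerivAt (fun t : ℝ => τ * t) τ 0 := by
      simpa using (hasDerivAt_id (0:ℝ)).const_mul τ
    have h2 : HasDerivAt (fun t : ℝ => Polynomial.eval t P * t ^ 2) 0 0 := by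
      have h3 := (P.hasDerivAt (0:ℝ)).mul (hasDerivAt_pow 2 (0:ℝ))
      simpa [Pi.mul_def] using h3
    simpa [Pi.add_def] using (h1.const_add (1:ℝ)).add h2
  have hDd : HasDerivAt D (D0 * τ) 0 := by
    have h4 : D = fun t => D0 * (1 + τ * t + Polynomial.eval t P * t ^ 2) := funext hfact
    rw [h4]
    exact hpoly.const_mul D0
  set c1 : ℝ := (D0⁻¹) ^ (-(1:ℝ)/(m:ℝ)) with hc1
  have hDinv : HasDerivAt (fun t => (D t)⁻¹) (-(D0 * τ) / D0 ^ 2) 0 := by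
    have h5 := hDd.inv (by rw [hD00]; exact hD0pos.ne')
    rw [hD00] at h5
    exact h5
  have hud : HasDerivAt (fun t => ((D t)⁻¹) ^ (-(1:ℝ)/(m:ℝ))) (τ / m * c1) 0 := by
    have h5 := hDinv.rpow_const (p := -(1:ℝ)/(m:ℝ))
      (Or.inl (by rw [hD00]; exact inv_ne_zero hD0pos.ne'))
    rw [hD00] at h5
    have hpow : (D0⁻¹) ^ (-(1:ℝ)/(m:ℝ) - 1) = c1 * D0 := by
      rw [Real.rpow_sub (inv_pos.mpr hD0pos), Real.rpow_one, hc1, div_eq_mul_inv, inv_inv]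
    rw [hpow] at h5
    convert h5 using 1
    field_simp
  set q : Fin n → ℝ → ℝ :=
    fun i t => ((D t)⁻¹) ^ (-(1:ℝ)/(m:ℝ)) * (e i ⬝ᵥ (Iv t).mulVec (e i)) with hq
  have hq_eq : ∀ i t, e i ⬝ᵥ (phiMat (Iv t)).mulVec (e i) = q i t := by
    intro i t
    simp only [hq, phiMat]
    rw [Matrix.det_nonsing_inv, Ring.inverse_eq_inv, Matrix.smul_mulVec,
      dotProduct_smul, smul_eq_mul]
  have hq0sqrt : ∀ i, Real.sqrt (q i 0) = d i * s₀ := by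
    intro i
    have h7 : e i ⬝ᵥ (phiMat Gm⁻¹).mulVec (e i) = q i 0 := by
      rw [← hIv0]; exact hq_eq i 0
    have h6 : d i = Real.sqrt (q i 0) / s₀ := by rw [hd i, h7]
    rw [h6]
    field_simp
  have hq0pos : ∀ i, 0 < q i 0 := by
    intro i
    apply Real.sqrt_pos.mp
    rw [hq0sqrt i]
    exact mul_pos (hdpos i) hs₀
  have hq0 : ∀ i, q i 0 = (d i * s₀) ^ 2 := by
    intro i
    rw [← hq0sqrt i]
    exact (Real.sq_sqrt (hq0pos i).le).symm
  set Q : Fin n → ℝ := fun i => τ / m * c1 * (e i ⬝ᵥ Gm⁻¹.mulVec (e i))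
    + c1 * (e i ⬝ᵥ N.mulVec (e i)) with hQ
  have hqd : ∀ i, HasDerivAt (q i) (Q i) 0 := by
    intro i
    have h8 := hud.mul (hbd i)
    simp only [hq]
    have hval : τ / ↑m * c1 * (e i ⬝ᵥ (Iv 0).mulVec (e i))
        + ((D 0)⁻¹) ^ (-(1:ℝ)/(m:ℝ)) * (e i ⬝ᵥ N.mulVec (e i)) = Q i := by
      rw [hIv0, hD00, hQ]
    exact hval ▸ h8
  have hσ0 : s (γ 0) = s₀ := by rw [hγ0]
  set R : Fin n → ℝ :=
    fun i => (Q i / (2 * (d i * s₀)) * s₀ - d i * s₀ * L) / s₀ ^ 2 with hR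
  have hrd : ∀ i, HasDerivAt (fun t => Real.sqrt (q i t) / s (γ t)) (R i) 0 := by
    intro i
    have h9 : HasDerivAt (fun t => Real.sqrt (q i t)) (Q i / (2 * Real.sqrt (q i 0))) 0 :=
      (hqd i).sqrt (hq0pos i).ne'
    have h10 := h9.div hσd (by rw [hσ0]; exact hs₀.ne')
    have hval : (Q i / (2 * Real.sqrt (q i 0)) * s (γ 0) - Real.sqrt (q i 0) * L)
        / s (γ 0) ^ 2 = R i := by
      rw [hσ0, hq0sqrt i, hR]
    exact hval ▸ h10
  have hFd : HasDerivAt (fun t => (1/(n:ℝ)) * ∑ i, ρ₀ (Real.sqrt (q i t) / s (γ t)))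
      ((1/(n:ℝ)) * ∑ i, deriv ρ₀ (d i) * R i) 0 := by
    apply HasDerivAt.const_mul
    apply HasDerivAt.fun_sum
    intro i _
    have h11 := (hρdiff (Real.sqrt (q i 0) / s (γ 0))).comp 0 (hrd i)
    have h12 : Real.sqrt (q i 0) / s (γ 0) = d i := by
      rw [hσ0, hq0sqrt i, mul_div_cancel_right₀ _ hs₀.ne']
    rw [h12] at h11
    simpa [Function.comp_def] using h11
  have hUev : ∀ᶠ t : ℝ in nhds 0, γ t ∈ U := hγd.continuousAt (hγ0.symm ▸ hU)
  have hPDev : ∀ᶠ t : ℝ in nhds 0, (A t).PosDef := by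
    have hHherm : Hm.IsHermitian := symMat_isHermitian H
    have h13 := posdef_line (by omega) Gm Hm hGmPD hHherm
    simpa only [hA] using h13
  have hFev : (fun t => (1/(n:ℝ)) * ∑ i, ρ₀ (Real.sqrt (q i t) / s (γ t)))
      =ᶠ[nhds 0] fun _ => δ₀ := by
    filter_upwards [hUev, hPDev] with t htU htPD
    have h12 := hcons (γ t) htU (by rw [hγA t]; exact htPD)
    rw [← h12]
    congr 1
    refine Finset.sum_congr rfl fun i _ => ?_
    rw [hγA t, show (A t)⁻¹ = Iv t from by simp only [hIv], hq_eq i t]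
  have hder0 : (1/(n:ℝ)) * ∑ i, deriv ρ₀ (d i) * R i = 0 := by
    rw [← hFd.deriv, Filter.EventuallyEq.deriv_eq hFev]
    exact deriv_const _ _
  have hsumR : ∑ i, deriv ρ₀ (d i) * R i = 0 := by
    rcases mul_eq_zero.mp hder0 with h | h
    · exact absurd h (one_div_ne_zero hnR)
    · exact h
  have htrace : ∀ M : Matrix (Fin m) (Fin m) ℝ,
      ∑ i, w₀ (d i) * (e i ⬝ᵥ M.mulVec (e i)) =
        ((s₀ ^ 2 * ∑ i, deriv ρ₀ (d i) * d i) / (m:ℝ)) *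
          ((Gm.det ^ (-(1:ℝ) / (m:ℝ))) * (M * Gm).trace) := by
    intro M
    have h13 : ∑ i, w₀ (d i) * (e i ⬝ᵥ M.mulVec (e i))
        = (M * ∑ i, w₀ (d i) • vecMulVec (e i) (e i)).trace := by
      rw [Finset.mul_sum, Matrix.trace_sum]
      exact Finset.sum_congr rfl fun i _ => by
        rw [mul_smul_comm, Matrix.trace_smul, trace_mul_vecMulVec, smul_eq_mul]
    rw [h13, hesteq, mul_smul_comm, Matrix.trace_smul, mul_smul_comm, Matrix.trace_smul,
      smul_eq_mul, smul_eq_mul]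
  have htr1 : (Gm⁻¹ * Gm).trace = (m : ℝ) := by
    rw [Matrix.nonsing_inv_mul _ hGdu, Matrix.trace_one]
    simp
  have htr2 : (N * Gm).trace = -τ := by
    rw [hN, Matrix.neg_mul, Matrix.trace_neg,
      Matrix.mul_assoc, Matrix.nonsing_inv_mul _ hGdu, Matrix.mul_one]
  have hT : ∑ i, w₀ (d i) * Q i = 0 := by
    have h14 : ∀ i, w₀ (d i) * Q i
        = τ / m * c1 * (w₀ (d i) * (e i ⬝ᵥ Gm⁻¹.mulVec (e i)))
          + c1 * (w₀ (d i) * (e i ⬝ᵥ N.mulVec (e i))) := fun i => by rw [hQ]; ring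
    rw [Finset.sum_congr rfl fun i _ => h14 i, Finset.sum_add_distrib,
      ← Finset.mul_sum, ← Finset.mul_sum, htrace Gm⁻¹, htrace N, htr1, htr2]
    field_simp [hmR]
    ring
  have h15 : ∀ i, deriv ρ₀ (d i) * R i
      = 1 / (2 * s₀ ^ 2) * (w₀ (d i) * Q i) - L / s₀ * (deriv ρ₀ (d i) * d i) := by
    intro i
    rw [hR, hw₀ (d i) (hdpos i).ne']
    field_simp [hs₀.ne', (hdpos i).ne']
  rw [Finset.sum_congr rfl fun i _ => h15 i, Finset.sum_sub_distrib,
    ← Finset.mul_sum, ← Finset.mul_sum, hT, mul_zero, zero_sub, neg_eq_zero] at hsumR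
  rcases mul_eq_zero.mp hsumR with h | h
  · rcases div_eq_zero_iff.mp h with h' | h'
    · exact h'
    · exact absurd h' hs₀.ne'
  · exact absurd h hsum
end
end
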